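/- arXiv:0710.0134 — 5 statements merged into one kernel-verified Lean document; each statement's English description precedes it below -/
import Mathlib

section
/- Let (l_s)_{s ∈ (ω∖{0})^{<ω}} be a family of partial functions from 2^ω to 2^ω such that: (i) dom(l_{s⌢k}) ⊆ dom(l_s) ∩ ⋂_{j<k} dom(l_{s⌢j}), and for all x ∈ dom(l_{s⌢k}) and all i ≤ |s|, l_{s⌢k}(x) ≠ l_{s↾i}(x); (ii) for all x ∈ dom(l_{s⌢k}), d(l_{s⌢k}(x), l_s(x)) < ε(s⌢k, x), where ε(s⌢k,x) := min(2^{-k}, min_{i<|s|} (1/4)·d(l_{s↾i+1}(x), l_{s↾i}(x)), min_{j<k} (1/4)·d(l_{s⌢j}(x), l_s(x))). Then for any s, t ∈ (ω∖{0})^{<ω} and any i < min(|s|,|t|) with s(i) < t(i) and s↾i = t↾i, for every x ∈ dom(l_s) ∩ dom(l_t) one has d(l_s(x), l_t(x)) ≥ (1/3)·d(l_{s↾i+1}(x), l_{s↾i}(x)). -/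
/-- Lemma 12 of the paper: a quantitative separation estimate.  Given a family
`(l_s)_{s ∈ (ω∖{0})^{<ω}}` of partial functions from `2^ω` to `2^ω` (with a fixed
metric `d` on `2^ω`) satisfying the domain-inclusion / distinctness condition (i) and
the contraction condition (ii) (expressed via the three bounds defining the minimum
`ε(s⌢k,x)`), if `s` and `t` agree up to `i` and `s(i) < t(i)`, then
`d(l_s(x), l_t(x)) ≥ (1/3)·d(l_{s↾i+1}(x), l_{s↾i}(x))` for all `x ∈ dom(l_s) ∩ dom(l_t)`. -/
theorem separation_estimate
    (l : List ℕ+ → (ℕ → Bool) → (ℕ → Bool))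
    (Dom : List ℕ+ → Set (ℕ → Bool))
    (d : (ℕ → Bool) → (ℕ → Bool) → ℝ)
    (hd_self : ∀ x, d x x = 0)
    (hd_symm : ∀ x y, d x y = d y x)
    (hd_tri : ∀ x y z, d x z ≤ d x y + d y z)
    (hd_eq : ∀ x y, d x y = 0 → x = y)
    (hdom : ∀ (s : List ℕ+) (k : ℕ+), ∀ x ∈ Dom (s ++ [k]),
      x ∈ Dom s ∧ ∀ j : ℕ+, j < k → x ∈ Dom (s ++ [j]))
    (hne : ∀ (s : List ℕ+) (k : ℕ+), ∀ x ∈ Dom (s ++ [k]),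
      ∀ i ≤ s.length, l (s ++ [k]) x ≠ l (s.take i) x)
    (hlt1 : ∀ (s : List ℕ+) (k : ℕ+), ∀ x ∈ Dom (s ++ [k]),
      d (l (s ++ [k]) x) (l s x) < (2 : ℝ) ^ (-((k : ℕ) : ℤ)))
    (hlt2 : ∀ (s : List ℕ+) (k : ℕ+), ∀ x ∈ Dom (s ++ [k]), ∀ i < s.length,
      d (l (s ++ [k]) x) (l s x) < (1/4) * d (l (s.take (i+1)) x) (l (s.take i) x))
    (hlt3 : ∀ (s : List ℕ+) (k : ℕ+), ∀ x ∈ Dom (s ++ [k]), ∀ j : ℕ+, j < k →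
      d (l (s ++ [k]) x) (l s x) < (1/4) * d (l (s ++ [j]) x) (l s x)) :
    ∀ (s t : List ℕ+) (i : ℕ) (hi : i < s.length) (hit : i < t.length),
      s.take i = t.take i → s.get ⟨i, hi⟩ < t.get ⟨i, hit⟩ →
      ∀ x, x ∈ Dom s → x ∈ Dom t →
        (1/3) * d (l (s.take (i+1)) x) (l (s.take i) x) ≤ d (l s x) (l t x) := by
  intro s t i hi hit hpre hlt x hxs hxt
  have hd_nonneg : ∀ a b, 0 ≤ d a b := by
    intro a b
    have h1 := hd_tri a b a
    rw [hd_self, hd_symm b a] at h1; linarith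
  have hconcat : ∀ (s : List ℕ+) (m : ℕ) (hm : m < s.length),
      s.take m ++ [s.get ⟨m, hm⟩] = s.take (m+1) := by
    intro s m hm
    simpa using List.take_concat_get s m hm
  have domtake : ∀ (s : List ℕ+), x ∈ Dom s → ∀ m, x ∈ Dom (s.take m) := by
    intro s hx m
    have key : ∀ j m, m + j = s.length → x ∈ Dom (s.take m) := by
      intro j
      induction j with
      | zero => intro m hm; simp at hm; subst hm; simpa using hx
      | succ j ih =>
        intro m hm
        have hm' : m < s.length := by omega
        have h1 : x ∈ Dom (s.take (m+1)) := ih (m+1) (by omega)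
        rw [← hconcat s m hm'] at h1
        exact (hdom _ _ x h1).1
    rcases le_or_gt s.length m with h | h
    · rwa [List.take_of_length_le h]
    · exact key (s.length - m) m (by omega)
  -- telescoping invariant
  have tele : ∀ (s : List ℕ+), x ∈ Dom s → ∀ i n, i ≤ n → n < s.length →
      d (l (s.take (n+1)) x) (l (s.take (i+1)) x)
        + (1/3) * d (l (s.take (n+1)) x) (l (s.take n) x)
      ≤ (1/3) * d (l (s.take (i+1)) x) (l (s.take i) x) := by
    intro s hx i n hin
    induction n, hin using Nat.le_induction with
    | base => intro _; rw [hd_self]; simp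
    | succ n hn ih =>
      intro hn1
      have hnlt : n < s.length := by omega
      have IH := ih hnlt
      have hx2 : x ∈ Dom (s.take (n+1) ++ [s.get ⟨n+1, hn1⟩]) := by
        rw [hconcat s (n+1) hn1]; exact domtake s hx (n+2)
      have step := hlt2 (s.take (n+1)) (s.get ⟨n+1, hn1⟩) x hx2 n
        (by rw [List.length_take]; omega)
      rw [hconcat s (n+1) hn1] at step
      simp only [List.take_take] at step
      have hmin1 : min (n+1) (n+1) = n + 1 := by omega
      have hmin2 : min n (n+1) = n := by omega
      rw [hmin1, hmin2] at step
      have tri := hd_tri (l (s.take (n+1+1)) x) (l (s.take (n+1)) x)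
        (l (s.take (i+1)) x)
      have hs := hd_symm (l (s.take (n+1+1)) x) (l (s.take (n+1)) x)
      linarith
  have cor : ∀ (s : List ℕ+), x ∈ Dom s → ∀ i, i < s.length →
      d (l s x) (l (s.take (i+1)) x)
        ≤ (1/3) * d (l (s.take (i+1)) x) (l (s.take i) x) := by
    intro s hx i hi
    have h := tele s hx i (s.length - 1) (by omega) (by omega)
    have he : s.length - 1 + 1 = s.length := by omega
    rw [he, List.take_length] at h
    have := hd_nonneg (l s x) (l (s.take (s.length - 1)) x)
    linarith
  have hA := cor s hxs i hi
  have hB := cor t hxt i hit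
  have hx3 : x ∈ Dom (s.take i ++ [t.get ⟨i, hit⟩]) := by
    rw [hpre, hconcat t i hit]; exact domtake t hxt (i+1)
  have hE := hlt3 (s.take i) (t.get ⟨i, hit⟩) x hx3 (s.get ⟨i, hi⟩) hlt
  rw [hconcat s i hi] at hE
  have h4 : s.take i ++ [t.get ⟨i, hit⟩] = t.take (i+1) := by
    rw [hpre]; exact hconcat t i hit
  rw [h4] at hE
  rw [← hpre] at hB
  have T1 := hd_tri (l (s.take (i+1)) x) (l s x) (l (s.take i) x)
  have T2 := hd_tri (l s x) (l t x) (l (s.take i) x)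
  have T3 := hd_tri (l t x) (l (t.take (i+1)) x) (l (s.take i) x)
  have S1 := hd_symm (l (s.take (i+1)) x) (l s x)
  linarith
end

section
/- Under the hypotheses of the previous separation lemma (conditions (d) and (e) of Lemma 11 on the family (l_s)), for any x in the intersection of all domains dom(l_w), the values l_s(x) for distinct s ∈ (ω∖{0})^{<ω} with x ∈ dom(l_s) ∩ dom(l_t) satisfy: if s ≠ t then l_s(x) ≠ l_t(x). -/
/-- Under the hypotheses of the separation lemma (conditions (d) and (e) of Lemma 11),
for any `x` lying in all the domains `dom(l_w)`, the values `l_s(x)` are pairwise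
distinct: `s ≠ t` implies `l_s(x) ≠ l_t(x)`. -/
theorem values_pairwise_distinct
    (l : List ℕ+ → (ℕ → Bool) → (ℕ → Bool))
    (Dom : List ℕ+ → Set (ℕ → Bool))
    (d : (ℕ → Bool) → (ℕ → Bool) → ℝ)
    (hd_self : ∀ x, d x x = 0)
    (hd_symm : ∀ x y, d x y = d y x)
    (hd_tri : ∀ x y z, d x z ≤ d x y + d y z)
    (hd_eq : ∀ x y, d x y = 0 → x = y)
    (hdom : ∀ (s : List ℕ+) (k : ℕ+), ∀ x ∈ Dom (s ++ [k]),
      x ∈ Dom s ∧ ∀ j : ℕ+, j < k → x ∈ Dom (s ++ [j]))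
    (hne : ∀ (s : List ℕ+) (k : ℕ+), ∀ x ∈ Dom (s ++ [k]),
      ∀ i ≤ s.length, l (s ++ [k]) x ≠ l (s.take i) x)
    (hlt1 : ∀ (s : List ℕ+) (k : ℕ+), ∀ x ∈ Dom (s ++ [k]),
      d (l (s ++ [k]) x) (l s x) < (2 : ℝ) ^ (-((k : ℕ) : ℤ)))
    (hlt2 : ∀ (s : List ℕ+) (k : ℕ+), ∀ x ∈ Dom (s ++ [k]), ∀ i < s.length,
      d (l (s ++ [k]) x) (l s x) < (1/4) * d (l (s.take (i+1)) x) (l (s.take i) x))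
    (hlt3 : ∀ (s : List ℕ+) (k : ℕ+), ∀ x ∈ Dom (s ++ [k]), ∀ j : ℕ+, j < k →
      d (l (s ++ [k]) x) (l s x) < (1/4) * d (l (s ++ [j]) x) (l s x)) :
    ∀ x, (∀ w : List ℕ+, x ∈ Dom w) →
      ∀ s t : List ℕ+, s ≠ t → l s x ≠ l t x := by
  intro x hx
  -- nonnegativity of d
  have hnn : ∀ u v, 0 ≤ d u v := by
    intro u v
    have h1 := hd_tri u v u
    have h2 := hd_self u
    have h3 := hd_symm u v
    linarith
  -- positivity of successive distances
  have hpos : ∀ (p : List ℕ+) (k : ℕ+), 0 < d (l (p ++ [k]) x) (l p x) := by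
    intro p k
    rcases lt_or_eq_of_le (hnn (l (p ++ [k]) x) (l p x)) with h | h
    · exact h
    · have hne' := hne p k x (hx _) p.length le_rfl
      rw [List.take_length] at hne'
      exact absurd (hd_eq _ _ h.symm) hne'
  -- geometric decay of successive distances along a chain
  have decay : ∀ (c : List ℕ+) (m : ℕ), ∀ n, m + n + 1 ≤ c.length →
      d (l (c.take (m + n + 1)) x) (l (c.take (m + n)) x)
        ≤ (1/4 : ℝ) ^ n * d (l (c.take (m + 1)) x) (l (c.take m) x) := by
    intro c m n
    induction n with
    | zero => intro _; simp
    | succ n ih =>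
      intro hn
      have hn' : m + n + 1 ≤ c.length := by omega
      have hlen : m + n + 1 < c.length := by omega
      have hstep : c.take (m + n + 1 + 1) = c.take (m + n + 1) ++ [c.get ⟨m + n + 1, hlen⟩] := by
        rw [List.take_succ]
        simp [List.getElem?_eq_getElem hlen]
      have htl : (c.take (m + n + 1)).length = m + n + 1 := by
        rw [List.length_take]; omega
      have hi : m + n < (c.take (m + n + 1)).length := by omega
      have h2 := hlt2 (c.take (m + n + 1)) (c.get ⟨m + n + 1, hlen⟩) x (hx _) (m + n) hi
      rw [← hstep] at h2
      rw [List.take_take, List.take_take] at h2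
      rw [min_eq_left (by omega), min_eq_left (by omega)] at h2
      have hih := ih hn'
      have hg0 : 0 ≤ d (l (c.take (m + 1)) x) (l (c.take m) x) := hnn _ _
      have : d (l (c.take (m + n + 1 + 1)) x) (l (c.take (m + n + 1)) x)
          ≤ 1/4 * ((1/4 : ℝ) ^ n * d (l (c.take (m + 1)) x) (l (c.take m) x)) := by
        nlinarith
      calc d (l (c.take (m + (n+1) + 1)) x) (l (c.take (m + (n+1))) x)
          = d (l (c.take (m + n + 1 + 1)) x) (l (c.take (m + n + 1)) x) := by ring_nf
        _ ≤ 1/4 * ((1/4 : ℝ) ^ n * d (l (c.take (m + 1)) x) (l (c.take m) x)) := this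
        _ = (1/4 : ℝ) ^ (n+1) * d (l (c.take (m + 1)) x) (l (c.take m) x) := by ring
  -- total drift bound
  have sumb : ∀ (c : List ℕ+) (m : ℕ), ∀ n, m + n + 1 ≤ c.length →
      d (l (c.take (m + n + 1)) x) (l (c.take (m + 1)) x)
        ≤ (1/3 : ℝ) * d (l (c.take (m + 1)) x) (l (c.take m) x) := by
    intro c m
    have key : ∀ n, m + n + 1 ≤ c.length →
        d (l (c.take (m + n + 1)) x) (l (c.take (m + 1)) x)
          ≤ (1/3 : ℝ) * (1 - (1/4 : ℝ) ^ n) * d (l (c.take (m + 1)) x) (l (c.take m) x) := by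
      intro n
      induction n with
      | zero => intro _; simp [hd_self]
      | succ n ih =>
        intro hn
        have hn' : m + n + 1 ≤ c.length := by omega
        have h1 := decay c m (n+1) (by omega)
        have h2 := ih hn'
        have h3 := hd_tri (l (c.take (m + (n+1) + 1)) x) (l (c.take (m + n + 1)) x)
          (l (c.take (m + 1)) x)
        have h4 : d (l (c.take (m + (n+1) + 1)) x) (l (c.take (m + (n+1))) x)
            = d (l (c.take (m + n + 1 + 1)) x) (l (c.take (m + n + 1)) x) := by ring_nf
        have hg0 : 0 ≤ d (l (c.take (m + 1)) x) (l (c.take m) x) := hnn _ _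
        have hp : (0:ℝ) ≤ (1/4 : ℝ) ^ n := by positivity
        rw [h4] at h1
        calc d (l (c.take (m + (n+1) + 1)) x) (l (c.take (m + 1)) x)
            ≤ d (l (c.take (m + n + 1 + 1)) x) (l (c.take (m + n + 1)) x)
              + d (l (c.take (m + n + 1)) x) (l (c.take (m + 1)) x) := by
              have : c.take (m + (n+1) + 1) = c.take (m + n + 1 + 1) := by ring_nf
              rw [this]; exact h3
          _ ≤ (1/4 : ℝ) ^ (n+1) * d (l (c.take (m + 1)) x) (l (c.take m) x)
              + (1/3 : ℝ) * (1 - (1/4 : ℝ) ^ n) * d (l (c.take (m + 1)) x) (l (c.take m) x) := by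
              linarith
          _ = (1/3 : ℝ) * (1 - (1/4 : ℝ) ^ (n+1)) * d (l (c.take (m + 1)) x) (l (c.take m) x) := by
              ring
    intro n hn
    have h := key n hn
    have hg0 : 0 ≤ d (l (c.take (m + 1)) x) (l (c.take m) x) := hnn _ _
    have hp : (0:ℝ) ≤ (1/4 : ℝ) ^ n := by positivity
    nlinarith
  -- drift bound for a node and any extension
  have drift : ∀ (w : List ℕ+) (a : ℕ+) (u : List ℕ+),
      d (l (w ++ a :: u) x) (l (w ++ [a]) x) ≤ (1/3 : ℝ) * d (l (w ++ [a]) x) (l w x) := by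
    intro w a u
    have hlen : (w ++ a :: u).length = w.length + u.length + 1 := by simp; omega
    have h := sumb (w ++ a :: u) w.length u.length (by omega)
    have e1 : (w ++ a :: u).take (w.length + u.length + 1) = w ++ a :: u := by
      rw [List.take_of_length_le (by omega)]
    have e2 : (w ++ a :: u).take (w.length + 1) = w ++ [a] := by
      have : w ++ a :: u = (w ++ [a]) ++ u := by simp
      rw [this, List.take_left' (by simp)]
    have e3 : (w ++ a :: u).take w.length = w := List.take_left
    rw [e1, e2, e3] at h
    exact h
  -- key separation for splitting sequences
  have key : ∀ (w : List ℕ+) (a b : ℕ+) (u v : List ℕ+), a < b →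
      l (w ++ a :: u) x ≠ l (w ++ b :: v) x := by
    intro w a b u v hab heq
    have hδ : 0 < d (l (w ++ [a]) x) (l w x) := hpos w a
    have hδ' := hlt3 w b x (hx _) a hab
    have h1 := drift w a u
    have h2 := drift w b v
    have h3 := hd_tri (l (w ++ [a]) x) (l (w ++ [b]) x) (l w x)
    have h4 := hd_tri (l (w ++ [a]) x) (l (w ++ a :: u) x) (l (w ++ [b]) x)
    have h5 : d (l (w ++ a :: u) x) (l (w ++ [b]) x)
        = d (l (w ++ b :: v) x) (l (w ++ [b]) x) := by rw [heq]
    have h6 := hd_symm (l (w ++ a :: u) x) (l (w ++ [a]) x)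
    have h7 := hd_symm (l (w ++ b :: v) x) (l (w ++ [b]) x)
    linarith
  -- prefix case
  have pref : ∀ (s t : List ℕ+), s <+: t → s ≠ t → l t x ≠ l s x := by
    intro s t hp hst
    obtain ⟨u, rfl⟩ := hp
    rcases u.eq_nil_or_concat with rfl | ⟨u', k, rfl⟩
    · simp at hst
    · have h := hne (s ++ u') k x (hx _) s.length (by simp)
      rw [List.take_left] at h
      simpa only [List.concat_eq_append, ← List.append_assoc] using h
  -- splitting of two distinct lists
  have split : ∀ (s t : List ℕ+), s <+: t ∨ t <+: s ∨
      ∃ w a b u v, a ≠ b ∧ s = w ++ a :: u ∧ t = w ++ b :: v := by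
    intro s
    induction s with
    | nil => intro t; left; exact List.nil_prefix
    | cons a s ih =>
      intro t
      cases t with
      | nil => right; left; exact List.nil_prefix
      | cons b t =>
        by_cases hab : a = b
        · subst hab
          rcases ih t with h | h | ⟨w, a', b', u, v, h1, h2, h3⟩
          · left; exact List.cons_prefix_cons.mpr ⟨rfl, h⟩
          · right; left; exact List.cons_prefix_cons.mpr ⟨rfl, h⟩
          · right; right
            exact ⟨a :: w, a', b', u, v, h1, by simp [h2], by simp [h3]⟩
        · right; right
          exact ⟨[], a, b, s, t, hab, by simp, by simp⟩
  intro s t hst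
  rcases split s t with h | h | ⟨w, a, b, u, v, hab, rfl, rfl⟩
  · exact (pref s t h hst).symm
  · exact pref t s h (Ne.symm hst)
  · rcases lt_or_gt_of_ne hab with h | h
    · exact key w a b u v h
    · exact (key w b a v u h).symm
end

section
/- With h_s as defined via the prime coding J, for every x ∈ 2^ω and every s ∈ (ω∖{0})^{<ω}, the sequence h_{s⌢k}(x) converges to h_s(x) in 2^ω as k → ∞. More precisely, the smallest coordinate n where h_{s⌢k}(x)(n) ≠ h_s(x)(n), if it exists, satisfies n ≥ J(s⌢k)/q_{|s|} − 1, which tends to infinity with k. -/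
/-- The prime coding `J(s) = ∏_{j<|s|} q_j^(s(j)+1)` (with `J(∅) = 0`). -/
noncomputable def Jcode (s : List ℕ) : ℕ :=
  if s = [] then 0
  else ∏ j ∈ Finset.range s.length, (Nat.nth Nat.Prime j) ^ (s.getD j 0 + 1)

/-- The function `h_s : 2^ω → 2^ω` of the example: `h_s(x)(k)` is
`x(J(s↾i)·q − J(s↾i)/q_{i−1} − 1)` when `k = (J(s↾i)/q_{i−1})·q − 1` with
`1 ≤ i ≤ |s|` maximal such that `k ≡ −1 (mod J(s↾i)/q_{i−1})`, and `x(k)` otherwise. -/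
noncomputable def hmap (s : List ℕ) (x : ℕ → Bool) : ℕ → Bool := fun k =>
  let I := (Finset.Icc 1 s.length).filter
    (fun j => (Jcode (s.take j) / Nat.nth Nat.Prime (j - 1)) ∣ (k + 1))
  if hI : I.Nonempty then
    let i := I.max' hI
    let q := (k + 1) / (Jcode (s.take i) / Nat.nth Nat.Prime (i - 1))
    x (Jcode (s.take i) * q - Jcode (s.take i) / Nat.nth Nat.Prime (i - 1) - 1)
  else x k

/-- Auxiliary: the product defining `Jcode` without the empty-list special case. -/
noncomputable def Jprod (s : List ℕ) : ℕ :=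
  ∏ j ∈ Finset.range s.length, (Nat.nth Nat.Prime j) ^ (s.getD j 0 + 1)

lemma Jprod_pos (s : List ℕ) : 0 < Jprod s := by
  apply Finset.prod_pos
  intro j _
  exact pow_pos (Nat.prime_nth_prime j).pos _

lemma Jcode_append_single (s : List ℕ) (k : ℕ) :
    Jcode (s ++ [k]) = Jprod s * (Nat.nth Nat.Prime s.length) ^ (k + 1) := by
  have hne : s ++ [k] ≠ [] := by simp
  rw [Jcode, if_neg hne, Jprod]
  rw [List.length_append, List.length_singleton, Finset.prod_range_succ]
  congr 1
  · apply Finset.prod_congr rfl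
    intro j hj
    rw [Finset.mem_range] at hj
    rw [List.getD_append _ _ _ _ hj]
  · rw [List.getD_append_right _ _ _ _ (le_refl s.length)]
    simp

lemma Dk_eq (s : List ℕ) (k : ℕ) :
    Jcode (s ++ [k]) / Nat.nth Nat.Prime s.length
      = Jprod s * (Nat.nth Nat.Prime s.length) ^ k := by
  rw [Jcode_append_single, pow_succ, ← mul_assoc]
  exact Nat.mul_div_cancel _ (Nat.prime_nth_prime s.length).pos

lemma Dk_pos (s : List ℕ) (k : ℕ) :
    0 < Jcode (s ++ [k]) / Nat.nth Nat.Prime s.length := by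
  rw [Dk_eq]
  exact Nat.mul_pos (Jprod_pos s) (pow_pos (Nat.prime_nth_prime s.length).pos k)

lemma Dk_ge (s : List ℕ) (k : ℕ) :
    k < Jcode (s ++ [k]) / Nat.nth Nat.Prime s.length := by
  rw [Dk_eq]
  calc k < 2 ^ k := Nat.lt_two_pow_self (n := k)
    _ ≤ (Nat.nth Nat.Prime s.length) ^ k :=
        Nat.pow_le_pow_left (Nat.prime_nth_prime s.length).two_le k
    _ ≤ Jprod s * (Nat.nth Nat.Prime s.length) ^ k :=
        Nat.le_mul_of_pos_left _ (Jprod_pos s)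

/-- The key lemma: if `J(s⌢k)/q_{|s|}` does not divide `n+1`, then `h_{s⌢k}(x)(n) = h_s(x)(n)`. -/
lemma hmap_append_eq (s : List ℕ) (k : ℕ) (x : ℕ → Bool) (n : ℕ)
    (h : ¬ (Jcode (s ++ [k]) / Nat.nth Nat.Prime s.length ∣ (n + 1))) :
    hmap (s ++ [k]) x n = hmap s x n := by
  have hfilter :
      ((Finset.Icc 1 (s ++ [k]).length).filter
        (fun j => (Jcode ((s ++ [k]).take j) / Nat.nth Nat.Prime (j - 1)) ∣ (n + 1)))
      = ((Finset.Icc 1 s.length).filter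
        (fun j => (Jcode (s.take j) / Nat.nth Nat.Prime (j - 1)) ∣ (n + 1))) := by
    ext j
    simp only [Finset.mem_filter, Finset.mem_Icc, List.length_append, List.length_singleton]
    constructor
    · rintro ⟨⟨h1, h2⟩, hd⟩
      rcases Nat.lt_or_ge j (s.length + 1) with hj | hj
      · have hj' : j ≤ s.length := Nat.lt_succ_iff.mp hj
        rw [List.take_append_of_le_length hj'] at hd
        exact ⟨⟨h1, hj'⟩, hd⟩
      · have hj' : j = s.length + 1 := le_antisymm h2 hj
        subst hj'
        rw [show s.length + 1 - 1 = s.length from rfl] at hd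
        rw [show List.take (s.length + 1) (s ++ [k]) = s ++ [k] by
          apply List.take_of_length_le; simp] at hd
        exact absurd hd h
    · rintro ⟨⟨h1, h2⟩, hd⟩
      refine ⟨⟨h1, le_trans h2 (Nat.le_succ _)⟩, ?_⟩
      rw [List.take_append_of_le_length h2]
      exact hd
  simp only [hmap]
  rw [hfilter]
  by_cases hne : ((Finset.Icc 1 s.length).filter
      (fun j => (Jcode (s.take j) / Nat.nth Nat.Prime (j - 1)) ∣ (n + 1))).Nonempty
  · rw [dif_pos hne, dif_pos hne]
    set i := Finset.max' _ hne with hi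
    have hmem := Finset.max'_mem _ hne
    rw [Finset.mem_filter, Finset.mem_Icc] at hmem
    have : (s ++ [k]).take i = s.take i :=
      List.take_append_of_le_length hmem.1.2
    rw [this]
  · rw [dif_neg hne, dif_neg hne]

open Filter in
/-- `h_{s⌢k}(x)` converges to `h_s(x)` as `k → ∞`; more precisely, the first
coordinate where they differ (if any) is at least `J(s⌢k)/q_{|s|} − 1`, which tends
to infinity with `k`. -/
theorem hmap_extension_tendsto (s : List ℕ) (hs : ∀ a ∈ s, 0 < a) (x : ℕ → Bool) :
    Tendsto (fun k : ℕ => hmap (s ++ [k]) x) atTop (nhds (hmap s x)) ∧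
    (∀ k : ℕ, 0 < k → ∀ n : ℕ,
      hmap (s ++ [k]) x n ≠ hmap s x n → (∀ m < n, hmap (s ++ [k]) x m = hmap s x m) →
      Jcode (s ++ [k]) / Nat.nth Nat.Prime s.length - 1 ≤ n) ∧
    Tendsto (fun k : ℕ => Jcode (s ++ [k]) / Nat.nth Nat.Prime s.length - 1)
      atTop atTop := by
  refine ⟨?_, ?_, ?_⟩
  · rw [tendsto_pi_nhds]
    intro n
    apply tendsto_const_nhds.congr'
    filter_upwards [eventually_ge_atTop (n + 1)] with k hk
    symm
    apply hmap_append_eq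
    intro hdvd
    have h1 := Nat.le_of_dvd (Nat.succ_pos n) hdvd
    have h2 := Dk_ge s k
    omega
  · intro k _ n hne _
    by_contra hlt
    push_neg at hlt
    apply hne
    apply hmap_append_eq
    intro hdvd
    have h1 := Nat.le_of_dvd (Nat.succ_pos n) hdvd
    have h2 := Dk_pos s k
    omega
  · apply tendsto_atTop_mono (f := fun k => k) ?_ tendsto_id
    intro k
    show k ≤ Jcode (s ++ [k]) / Nat.nth Nat.Prime s.length - 1
    have := Dk_ge s k
    omega
end

section
/- With h_s as defined via the prime coding J, for any distinct s, t ∈ (ω∖{0})^{<ω}, the set {x ∈ 2^ω : h_s(x) ≠ h_t(x)} is dense in 2^ω. -/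
noncomputable def pp (j : ℕ) : ℕ := Nat.nth Nat.Prime j

lemma pp_prime (j : ℕ) : (pp j).Prime := Nat.prime_nth_prime j
lemma pp_pos (j : ℕ) : 0 < pp j := (pp_prime j).pos
lemma pp_two (j : ℕ) : 2 ≤ pp j := (pp_prime j).two_le
lemma pp_inj : Function.Injective pp := Nat.nth_injective Nat.infinite_setOf_prime
lemma pp_mono : Monotone pp := (Nat.nth_strictMono Nat.infinite_setOf_prime).monotone

/-- `Pp s n = ∏_{l<n} pp l ^ (s l + 1)`. -/
noncomputable def Pp (s : List ℕ) (n : ℕ) : ℕ :=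
  ∏ l ∈ Finset.range n, pp l ^ (s.getD l 0 + 1)

lemma Pp_pos (s : List ℕ) (n : ℕ) : 0 < Pp s n :=
  Finset.prod_pos fun l _ => pow_pos (pp_pos l) _

lemma Pp_succ (s : List ℕ) (n : ℕ) :
    Pp s (n + 1) = Pp s n * pp n ^ (s.getD n 0 + 1) := Finset.prod_range_succ _ n

lemma Jcode_take (s : List ℕ) (j : ℕ) (h1 : 1 ≤ j) (h2 : j ≤ s.length) :
    Jcode (s.take j) = Pp s j := by
  have hne : s.take j ≠ [] := by
    simp only [ne_eq, List.take_eq_nil_iff]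
    push_neg
    refine ⟨by omega, ?_⟩
    intro h; rw [h] at h2; simp at h2; omega
  rw [Jcode, if_neg hne, Pp]
  have hlen : (s.take j).length = j := by
    simp [List.length_take]; omega
  rw [hlen]
  apply Finset.prod_congr rfl
  intro l hl
  rw [Finset.mem_range] at hl
  congr 2
  rw [List.getD_eq_getElem?_getD, List.getD_eq_getElem?_getD, List.getElem?_take, if_pos hl]

/-- `dd s j = Jcode(s↾j) / q_{j-1}`. -/
noncomputable def dd (s : List ℕ) (j : ℕ) : ℕ := Jcode (s.take j) / pp (j - 1)

lemma Jcode_take_eq (s : List ℕ) (j : ℕ) (h1 : 1 ≤ j) (h2 : j ≤ s.length) :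
    Jcode (s.take j) = Pp s (j - 1) * pp (j - 1) ^ (s.getD (j - 1) 0) * pp (j - 1) := by
  obtain ⟨n, rfl⟩ : ∃ n, j = n + 1 := ⟨j - 1, by omega⟩
  rw [Jcode_take s (n+1) h1 h2, Pp_succ]
  simp only [Nat.add_sub_cancel, pow_succ]
  ring

lemma dd_eq (s : List ℕ) (j : ℕ) (h1 : 1 ≤ j) (h2 : j ≤ s.length) :
    dd s j = Pp s (j - 1) * pp (j - 1) ^ (s.getD (j - 1) 0) := by
  rw [dd, Jcode_take_eq s j h1 h2, Nat.mul_div_cancel _ (pp_pos _)]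

lemma dd_pos (s : List ℕ) (j : ℕ) (h1 : 1 ≤ j) (h2 : j ≤ s.length) : 0 < dd s j := by
  rw [dd_eq s j h1 h2]
  exact Nat.mul_pos (Pp_pos s _) (pow_pos (pp_pos _) _)

lemma Jcode_eq_pp_mul_dd (s : List ℕ) (j : ℕ) (h1 : 1 ≤ j) (h2 : j ≤ s.length) :
    Jcode (s.take j) = pp (j - 1) * dd s j := by
  rw [Jcode_take_eq s j h1 h2, dd_eq s j h1 h2]
  ring

lemma nu_pow (l e m : ℕ) : ((pp l) ^ e).factorization (pp m) = if l = m then e else 0 := by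
  rw [(pp_prime l).factorization_pow]
  by_cases h : l = m
  · subst h; simp
  · rw [Finsupp.single_apply, if_neg (fun hh => h (pp_inj hh))]
    simp [h]

lemma nu_Pp (s : List ℕ) (n m : ℕ) :
    (Pp s n).factorization (pp m) = if m < n then s.getD m 0 + 1 else 0 := by
  induction n with
  | zero => simp [Pp]
  | succ n ih =>
    rw [Pp_succ, Nat.factorization_mul (Pp_pos s n).ne' (pow_pos (pp_pos n) _).ne']
    rw [Finsupp.add_apply, ih, nu_pow]
    by_cases h2 : n = m
    · subst h2; simp
    · rw [if_neg h2]
      by_cases h1 : m < n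
      · rw [if_pos h1, if_pos (by omega)]
      · rw [if_neg h1, if_neg (by omega)]

lemma not_dvd_of_val_lt {a n p : ℕ} (hn : n ≠ 0)
    (h : n.factorization p < a.factorization p) : ¬ a ∣ n := by
  intro hd
  have ha : a ≠ 0 := by rintro rfl; exact hn (Nat.eq_zero_of_zero_dvd hd)
  have := (Nat.factorization_le_iff_dvd ha hn).2 hd
  have := Finsupp.le_def.mp this p
  omega
lemma dd_def (s : List ℕ) (j : ℕ) : Jcode (s.take j) / Nat.nth Nat.Prime (j - 1) = dd s j := rfl

lemma hmap_eq_of_max (s : List ℕ) (x : ℕ → Bool) (k i : ℕ)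
    (h1 : 1 ≤ i) (h2 : i ≤ s.length)
    (hdvd : dd s i ∣ k + 1)
    (hnd : ∀ j, i < j → j ≤ s.length → ¬ dd s j ∣ k + 1) :
    hmap s x k = x (Jcode (s.take i) * ((k + 1) / dd s i) - dd s i - 1) := by
  rw [hmap]
  simp only [dd_def]
  set I := (Finset.Icc 1 s.length).filter (fun j => dd s j ∣ (k + 1)) with hIdef
  have hmem : i ∈ I := by
    rw [hIdef, Finset.mem_filter, Finset.mem_Icc]
    exact ⟨⟨h1, h2⟩, hdvd⟩
  have hne : I.Nonempty := ⟨i, hmem⟩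
  erw [dif_pos hne]
  have hmax : I.max' hne = i := by
    apply le_antisymm
    · apply Finset.max'_le
      intro y hy
      rw [hIdef, Finset.mem_filter, Finset.mem_Icc] at hy
      by_contra hlt
      exact hnd y (by omega) hy.1.2 hy.2
    · exact Finset.le_max' I i hmem
  erw [hmax]

lemma hmap_eq_of_empty (s : List ℕ) (x : ℕ → Bool) (k : ℕ)
    (hnd : ∀ j, 1 ≤ j → j ≤ s.length → ¬ dd s j ∣ k + 1) :
    hmap s x k = x k := by
  rw [hmap]
  simp only [dd_def]
  erw [dif_neg]
  erw [Finset.not_nonempty_iff_eq_empty, Finset.filter_eq_empty_iff]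
  intro j hj
  rw [Finset.mem_Icc] at hj
  exact hnd j hj.1 hj.2

lemma read_mid (s : List ℕ) (m M E : ℕ) (hm : m < s.length)
    (hpos : ∀ l, l < s.length → 0 < s.getD l 0)
    (hE : s.getD m 0 ≤ E) (hM : 0 < M)
    (hfac : ∀ l, l ≤ s.length → ¬ pp l ∣ M) (x : ℕ → Bool) :
    hmap s x (Pp s m * pp m ^ E * M - 1)
      = x (pp m * (Pp s m * pp m ^ (s.getD m 0)) * (pp m ^ (E - s.getD m 0) * M)
            - Pp s m * pp m ^ (s.getD m 0) - 1) := by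
  set e := s.getD m 0 with he
  set k1 := Pp s m * pp m ^ E * M with hk1
  have hk1pos : 0 < k1 := by
    apply Nat.mul_pos (Nat.mul_pos (Pp_pos s m) (pow_pos (pp_pos m) E)) hM
  have hk : k1 - 1 + 1 = k1 := by omega
  have hk1ne : k1 ≠ 0 := by omega
  have hdd : dd s (m + 1) = Pp s m * pp m ^ e := by
    rw [dd_eq s (m+1) (by omega) (by omega), Nat.add_sub_cancel]
  obtain ⟨c, hc⟩ : ∃ c, E = e + c := ⟨E - e, by omega⟩
  have hce : E - e = c := by omega
  have hsplit : k1 = (Pp s m * pp m ^ e) * (pp m ^ (E - e) * M) := by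
    rw [hk1, hce, hc, pow_add]; ring
  have hdvd : dd s (m + 1) ∣ k1 - 1 + 1 := by
    rw [hk, hdd, hsplit]; exact Dvd.intro _ rfl
  -- valuation of k1 at pp (m+1) is 0
  have hvk : k1.factorization (pp (m+1)) = 0 := by
    rw [hk1, Nat.factorization_mul (Nat.mul_pos (Pp_pos s m) (pow_pos (pp_pos m) E)).ne' (by omega),
      Nat.factorization_mul (Pp_pos s m).ne' (pow_pos (pp_pos m) E).ne']
    simp only [Finsupp.add_apply, Finsupp.coe_add, Pi.add_apply]
    rw [nu_Pp, nu_pow, if_neg (by omega), if_neg (by omega),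
      Nat.factorization_eq_zero_of_not_dvd (hfac (m+1) (by omega))]
  have hnd : ∀ j, m + 1 < j → j ≤ s.length → ¬ dd s j ∣ k1 - 1 + 1 := by
    intro j hj1 hj2
    obtain ⟨j1, rfl⟩ : ∃ j1, j = j1 + 1 := ⟨j - 1, by omega⟩
    rw [hk]
    apply not_dvd_of_val_lt hk1ne
    rw [hvk, dd_eq s (j1+1) (by omega) hj2,
      Nat.factorization_mul (Pp_pos s _).ne' (pow_pos (pp_pos _) _).ne']
    simp only [Finsupp.add_apply, Finsupp.coe_add, Pi.add_apply, Nat.add_sub_cancel]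
    rw [nu_Pp, nu_pow]
    have hp1 : 0 < s.getD (m+1) 0 := hpos (m+1) (by omega)
    by_cases hcase : j1 = m + 1
    · subst hcase
      rw [if_neg (by omega), if_pos rfl]
      omega
    · rw [if_pos (by omega), if_neg (by omega)]
      omega
  rw [hmap_eq_of_max s x (k1 - 1) (m + 1) (by omega) (by omega) hdvd hnd]
  rw [hk, Jcode_eq_pp_mul_dd s (m+1) (by omega) (by omega), Nat.add_sub_cancel, hdd]
  rw [hsplit, Nat.mul_div_cancel_left _ (Nat.mul_pos (Pp_pos s m) (pow_pos (pp_pos m) e))]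

lemma read_low (s : List ℕ) (m R M : ℕ) (hm : m = s.length) (h1 : 1 ≤ m)
    (hM : 0 < M) (hR : 0 < R) (x : ℕ → Bool) :
    hmap s x (Pp s m * R * M - 1)
      = x (pp (m-1) * dd s m * (pp (m-1) * (R * M)) - dd s m - 1) := by
  set k1 := Pp s m * R * M with hk1
  have hk1pos : 0 < k1 := Nat.mul_pos (Nat.mul_pos (Pp_pos s m) hR) hM
  have hk : k1 - 1 + 1 = k1 := by omega
  have hPp : Pp s m = pp (m-1) * dd s m := by
    rw [← Jcode_eq_pp_mul_dd s m h1 (le_of_eq hm), Jcode_take s m h1 (le_of_eq hm)]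
  have hsplit : k1 = dd s m * (pp (m-1) * (R * M)) := by
    rw [hk1, hPp]; ring
  have hdvd : dd s m ∣ k1 - 1 + 1 := by
    rw [hk, hsplit]; exact Dvd.intro _ rfl
  have hddpos : 0 < dd s m := dd_pos s m h1 (le_of_eq hm)
  have hnd : ∀ j, m < j → j ≤ s.length → ¬ dd s j ∣ k1 - 1 + 1 := by
    intro j hj1 hj2; omega
  rw [hmap_eq_of_max s x (k1 - 1) m h1 (le_of_eq hm) hdvd hnd]
  rw [hk, Jcode_eq_pp_mul_dd s m h1 (le_of_eq hm)]
  rw [hsplit, Nat.mul_div_cancel_left _ hddpos]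

lemma read_nil (x : ℕ → Bool) (k : ℕ) : hmap [] x k = x k := by
  apply hmap_eq_of_empty
  intro j hj1 hj2
  simp at hj2
  omega

lemma arith_mid (N p u v M d : ℕ) (hp : 2 ≤ p) (hu : 1 ≤ u) (hv : 2 ≤ v)
    (hM : N + 2 ≤ M) (hd : d = u * v) :
    N < d * M - 1 ∧ d * M - 1 ≤ p * u * (v * M) - u - 1 ∧
      d * M - 1 ≤ p * d * M - d - 1 ∧
      p * u * (v * M) - u - 1 ≠ p * d * M - d - 1 := by
  subst hd
  have e1 : p * u * (v * M) = p * (u * v * M) := by ring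
  have e2 : p * (u * v) * M = p * (u * v * M) := by ring
  have e3 : u * v * M = (u * v) * M := rfl
  rw [e1, e2]
  have hB : 2 * (u * v * M) ≤ p * (u * v * M) := Nat.mul_le_mul_right _ hp
  have hA1 : u * v * 1 ≤ u * v * M := Nat.mul_le_mul_left _ (by omega)
  have hA2 : 1 * M ≤ u * v * M := Nat.mul_le_mul_right _ (by nlinarith)
  have hu2 : u * 2 ≤ u * v := Nat.mul_le_mul_left _ hv
  omega

lemma arith_low (N p Q c R M D' : ℕ) (hp : 2 ≤ p) (hQ : 2 ≤ Q) (hc : 1 ≤ c)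
    (hR : 1 ≤ R) (hM : N + 2 ≤ M) (hD : D' = Q * c) :
    N < D' * R * M - 1 ∧ D' * R * M - 1 ≤ Q * c * (Q * (R * M)) - c - 1 ∧
      D' * R * M - 1 ≤ p * (D' * R) * M - D' * R - 1 ∧
      Q * c * (Q * (R * M)) - c - 1 ≠ p * (D' * R) * M - D' * R - 1 := by
  subst hD
  set S := Q * (R * M) with hS
  have ek : Q * c * R * M = c * S := by rw [hS]; ring
  have ea : Q * c * (Q * (R * M)) = c * (Q * S) := by rw [hS]; ring
  have eb : p * (Q * c * R) * M = c * (p * S) := by rw [hS]; ring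
  have eb2 : Q * c * R = c * (Q * R) := by ring
  rw [ek, ea, eb, eb2]
  have hS1 : 1 * (R * M) ≤ S := by rw [hS]; exact Nat.mul_le_mul_right _ (by omega)
  have hMRM : 1 * M ≤ R * M := Nat.mul_le_mul_right _ hR
  have hQRS : Q * R * 1 ≤ S := by
    rw [hS, ← mul_assoc]; exact Nat.mul_le_mul_left _ (by omega)
  have hSpos : 1 ≤ S := by omega
  have h2S : 2 * S ≤ p * S := Nat.mul_le_mul_right _ hp
  have h2S' : 2 * S ≤ Q * S := Nat.mul_le_mul_right _ hQ
  have hY : c * (2 * S) ≤ c * (Q * S) := Nat.mul_le_mul_left _ h2S'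
  have hZ : c * (2 * S) ≤ c * (p * S) := Nat.mul_le_mul_left _ h2S
  have hY' : c * (2 * S) = 2 * (c * S) := by ring
  have hcX : c * 1 ≤ c * S := Nat.mul_le_mul_left _ hSpos
  have hWX : c * (Q * R) ≤ c * S := Nat.mul_le_mul_left _ (by omega)
  have hXM : 1 * S ≤ c * S := Nat.mul_le_mul_right _ hc
  have hne : c * (Q * S) - c - 1 ≠ c * (p * S) - c * (Q * R) - 1 := by
    intro heq
    have h1 : c * (Q * S) - c = c * (p * S) - c * (Q * R) := by omega
    have h2 : c * (Q * S - 1) = c * (p * S - Q * R) := by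
      rw [Nat.mul_sub, Nat.mul_sub, Nat.mul_one]; exact h1
    have h3 : Q * S - 1 = p * S - Q * R := Nat.eq_of_mul_eq_mul_left (by omega) h2
    have e4 : p * S = Q * (p * (R * M)) := by rw [hS]; ring
    have h5 : Q * S - 1 = Q * (p * (R * M) - R) := by
      rw [h3, e4, ← Nat.mul_sub]
    have h6 : Q ∣ Q * S - Q * (p * (R * M) - R) := Nat.dvd_sub ⟨S, rfl⟩ ⟨_, rfl⟩
    have h7 : Q * S - Q * (p * (R * M) - R) = 1 := by omega
    rw [h7] at h6
    have := Nat.le_of_dvd one_pos h6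
    omega
  refine ⟨by omega, by omega, by omega, hne⟩

lemma arith_nil (N p D R M : ℕ) (hp : 2 ≤ p) (hD : D = 1) (hR : 1 ≤ R)
    (hM : N + 2 ≤ M) :
    N < D * R * M - 1 ∧ D * R * M - 1 ≤ p * (D * R) * M - D * R - 1 ∧
      D * R * M - 1 ≠ p * (D * R) * M - D * R - 1 := by
  subst hD
  simp only [one_mul]
  have e1 : p * R * M = p * (R * M) := by ring
  rw [e1]
  have h1 : 2 * (R * M) ≤ p * (R * M) := Nat.mul_le_mul_right _ hp
  have h2 : R * 2 ≤ R * M := Nat.mul_le_mul_left _ (by omega)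
  have h3 : 1 * M ≤ R * M := Nat.mul_le_mul_right _ hR
  omega

lemma Pp_congr (s t : List ℕ) (m : ℕ) (h : ∀ l, l < m → s.getD l 0 = t.getD l 0) :
    Pp s m = Pp t m :=
  Finset.prod_congr rfl fun l hl => by rw [h l (Finset.mem_range.mp hl)]

lemma key (s t : List ℕ) (hspos : ∀ l, l < s.length → 0 < s.getD l 0)
    (htpos : ∀ l, l < t.length → 0 < t.getD l 0)
    (m : ℕ) (hms : m ≤ s.length) (hmt : m < t.length)
    (hagree : ∀ l, l < m → s.getD l 0 = t.getD l 0)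
    (hlt : s.getD m 0 < t.getD m 0) (N : ℕ) :
    ∃ k a b, N < k ∧ k ≤ a ∧ k ≤ b ∧ a ≠ b ∧
      (∀ x, hmap s x k = x a) ∧ (∀ x, hmap t x k = x b) := by
  set E := t.getD m 0 with hE
  set L := max s.length t.length with hL
  obtain ⟨M, hMge, hMp⟩ := Nat.exists_infinite_primes (max (pp L) (N + 2) + 1)
  have hfac : ∀ l, l ≤ L → ¬ pp l ∣ M := by
    intro l hl hdvd
    have heq : pp l = M := ((Nat.prime_dvd_prime_iff_eq (pp_prime l) hMp).mp hdvd)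
    have : pp l ≤ pp L := pp_mono hl
    omega
  have hM2 : N + 2 ≤ M := by omega
  have hMpos : 0 < M := by omega
  have hPP : Pp s m = Pp t m := Pp_congr s t m hagree
  -- the t-side read
  have hbt := fun x => read_mid t m M E hmt htpos (le_refl E) hMpos
    (fun l hl => hfac l (le_trans hl (le_max_right _ _))) x
  simp only [Nat.sub_self, pow_zero, one_mul, ← hE] at hbt
  rcases Nat.lt_or_ge m s.length with hc1 | hc2
  · -- case m < |s|
    have hat := fun x => read_mid s m M E hc1 hspos (le_of_lt hlt) hMpos
      (fun l hl => hfac l (le_trans hl (le_max_left _ _))) x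
    rw [hPP] at hat
    have harith := arith_mid N (pp m) (Pp t m * pp m ^ (s.getD m 0)) (pp m ^ (E - s.getD m 0))
      M (Pp t m * pp m ^ E) (pp_two m)
      (Nat.mul_pos (Pp_pos t m) (pow_pos (pp_pos m) _))
      (by
        calc 2 = 2 ^ 1 := by norm_num
        _ ≤ pp m ^ 1 := Nat.pow_le_pow_left (pp_two m) 1
        _ ≤ pp m ^ (E - s.getD m 0) := Nat.pow_le_pow_right (pp_pos m) (by omega))
      hM2
      (by rw [mul_assoc, ← pow_add]; congr 2; omega)
    exact ⟨Pp t m * pp m ^ E * M - 1, _, _, harith.1, harith.2.1, harith.2.2.1,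
      harith.2.2.2, hat, hbt⟩
  · -- case m = |s|
    have hm_eq : m = s.length := le_antisymm hms hc2
    rcases Nat.eq_zero_or_pos m with hm0 | hm1
    · -- m = 0, s = []
      have hsnil : s = [] := List.length_eq_zero_iff.mp (by omega)
      subst hsnil
      have hD1 : Pp t 0 = 1 := by simp [Pp]
      have harith := arith_nil N (pp m) (Pp t m) (pp m ^ E) M (pp_two m)
        (by rw [hm0]; exact hD1) (pow_pos (pp_pos m) E) hM2
      exact ⟨Pp t m * pp m ^ E * M - 1, _, _, harith.1, le_refl _, harith.2.1,
        harith.2.2, fun x => read_nil x _, hbt⟩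
    · -- m = |s| ≥ 1
      have hat := fun x => read_low s m (pp m ^ E) M hm_eq hm1 hMpos
        (pow_pos (pp_pos m) E) x
      rw [hPP] at hat
      have hQc : Pp t m = pp (m-1) * dd s m := by
        rw [← hPP, ← Jcode_take s m hm1 (le_of_eq hm_eq),
          Jcode_eq_pp_mul_dd s m hm1 (le_of_eq hm_eq)]
      have harith := arith_low N (pp m) (pp (m-1)) (dd s m) (pp m ^ E) M (Pp t m)
        (pp_two m) (pp_two (m-1)) (dd_pos s m hm1 (le_of_eq hm_eq))
        (pow_pos (pp_pos m) E) hM2 hQc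
      exact ⟨Pp t m * pp m ^ E * M - 1, _, _, harith.1, harith.2.1, harith.2.2.1,
        harith.2.2.2, hat, hbt⟩

lemma dense_of_key (s t : List ℕ)
    (h : ∀ N, ∃ k a b, N < k ∧ k ≤ a ∧ k ≤ b ∧ a ≠ b ∧
      (∀ x, hmap s x k = x a) ∧ (∀ x, hmap t x k = x b)) :
    Dense {x : ℕ → Bool | hmap s x ≠ hmap t x} := by
  rw [(isTopologicalBasis_pi
    (fun _ : ℕ => TopologicalSpace.isTopologicalBasis_opens)).dense_iff]
  rintro o ⟨U, F, hU, rfl⟩ ⟨y, hy⟩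
  obtain ⟨N, hN⟩ : ∃ N, ∀ i ∈ F, i ≤ N := ⟨F.sup id, fun i hi => Finset.le_sup (f := id) hi⟩
  obtain ⟨k, a, b, hNk, hka, hkb, hab, hha, hhb⟩ := h N
  set z : ℕ → Bool := fun n => if n = a then true else if n = b then false else y n with hz
  refine ⟨z, ?_, ?_⟩
  · intro i hi
    have hiF : i ∈ F := hi
    have hiN : i ≤ N := hN i hiF
    have hzy : z i = y i := by
      rw [hz]
      simp only
      rw [if_neg (by omega), if_neg (by omega)]
    rw [hzy]
    exact hy i hi
  · show hmap s z ≠ hmap t z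
    intro heq
    have h1 : hmap s z k = true := by rw [hha z, hz]; simp
    have h2 : hmap t z k = false := by
      rw [hhb z, hz]
      simp [Ne.symm hab]
    rw [heq, h2] at h1
    exact Bool.false_ne_true h1
/-- For distinct finite sequences `s ≠ t` of positive integers, the set of `x ∈ 2^ω`
where `h_s(x) ≠ h_t(x)` is dense in `2^ω`. -/
theorem hmap_distinct_dense (s t : List ℕ) (hs : ∀ a ∈ s, 0 < a)
    (ht : ∀ a ∈ t, 0 < a) (hst : s ≠ t) :
    Dense {x : ℕ → Bool | hmap s x ≠ hmap t x} := by
  have hspos : ∀ l, l < s.length → 0 < s.getD l 0 := by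
    intro l hl
    rw [List.getD_eq_getElem?_getD, List.getElem?_eq_getElem hl]
    exact hs _ (List.getElem_mem hl)
  have htpos : ∀ l, l < t.length → 0 < t.getD l 0 := by
    intro l hl
    rw [List.getD_eq_getElem?_getD, List.getElem?_eq_getElem hl]
    exact ht _ (List.getElem_mem hl)
  have hsym : {x : ℕ → Bool | hmap s x ≠ hmap t x} = {x : ℕ → Bool | hmap t x ≠ hmap s x} := by
    ext x; exact ne_comm
  have hex : ∃ n : ℕ, s[n]? ≠ t[n]? := by
    by_contra h
    push_neg at h
    exact hst (List.ext_getElem? h)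
  classical
  set m := Nat.find hex with hm
  have hPm : s[m]? ≠ t[m]? := Nat.find_spec hex
  have hmin : ∀ l, l < m → s[l]? = t[l]? := by
    intro l hl
    have := Nat.find_min hex hl
    simpa using this
  have hagree : ∀ l, l < m → s.getD l 0 = t.getD l 0 := by
    intro l hl
    rw [List.getD_eq_getElem?_getD, List.getD_eq_getElem?_getD, hmin l hl]
  have hms : m ≤ s.length := by
    by_contra h'
    push_neg at h'
    have h1 : s[s.length]? = none := List.getElem?_eq_none_iff.mpr (le_refl _)
    have h2 : t[s.length]? = none := (hmin s.length h').symm.trans h1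
    have h3 : t.length ≤ s.length := List.getElem?_eq_none_iff.mp h2
    have h4 : s[m]? = none := List.getElem?_eq_none_iff.mpr (by omega)
    have h5 : t[m]? = none := List.getElem?_eq_none_iff.mpr (by omega)
    exact hPm (h4.trans h5.symm)
  have hmt : m ≤ t.length := by
    by_contra h'
    push_neg at h'
    have h1 : t[t.length]? = none := List.getElem?_eq_none_iff.mpr (le_refl _)
    have h2 : s[t.length]? = none := (hmin t.length h').trans h1
    have h3 : s.length ≤ t.length := List.getElem?_eq_none_iff.mp h2
    have h4 : s[m]? = none := List.getElem?_eq_none_iff.mpr (by omega)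
    have h5 : t[m]? = none := List.getElem?_eq_none_iff.mpr (by omega)
    exact hPm (h4.trans h5.symm)
  rcases h1 : s[m]? with _ | a <;> rcases h2 : t[m]? with _ | b
  · rw [h1, h2] at hPm; exact absurd rfl hPm
  · -- s ends at m, t continues
    have hmt' : m < t.length := by
      by_contra h'
      rw [List.getElem?_eq_none_iff.mpr (by omega)] at h2
      exact nomatch h2
    apply dense_of_key s t
    intro N
    apply key s t hspos htpos m hms hmt' hagree _ N
    have hgs : s.getD m 0 = 0 := by
      rw [List.getD_eq_getElem?_getD, h1]; rfl
    have hgt : t.getD m 0 = b := by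
      rw [List.getD_eq_getElem?_getD, h2]; rfl
    rw [hgs, hgt]
    exact ht b (List.mem_of_getElem? h2)
  · -- t ends at m, s continues
    have hms' : m < s.length := by
      by_contra h'
      rw [List.getElem?_eq_none_iff.mpr (by omega)] at h1
      exact nomatch h1
    rw [hsym]
    apply dense_of_key t s
    intro N
    apply key t s htpos hspos m hmt hms' (fun l hl => (hagree l hl).symm) _ N
    have hgt : t.getD m 0 = 0 := by
      rw [List.getD_eq_getElem?_getD, h2]; rfl
    have hgs : s.getD m 0 = a := by
      rw [List.getD_eq_getElem?_getD, h1]; rfl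
    rw [hgs, hgt]
    exact hs a (List.mem_of_getElem? h1)
  · -- both continue, values differ
    have hms' : m < s.length := by
      by_contra h'
      rw [List.getElem?_eq_none_iff.mpr (by omega)] at h1
      exact nomatch h1
    have hmt' : m < t.length := by
      by_contra h'
      rw [List.getElem?_eq_none_iff.mpr (by omega)] at h2
      exact nomatch h2
    have hgs : s.getD m 0 = a := by
      rw [List.getD_eq_getElem?_getD, h1]; rfl
    have hgt : t.getD m 0 = b := by
      rw [List.getD_eq_getElem?_getD, h2]; rfl
    have hab : a ≠ b := by
      rw [h1, h2] at hPm
      intro h'; exact hPm (by rw [h'])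
    rcases Nat.lt_or_ge a b with hlt | hge
    · apply dense_of_key s t
      intro N
      exact key s t hspos htpos m hms hmt' hagree (by rw [hgs, hgt]; exact hlt) N
    · have hlt' : b < a := by omega
      rw [hsym]
      apply dense_of_key t s
      intro N
      exact key t s htpos hspos m hmt hms' (fun l hl => (hagree l hl).symm)
        (by rw [hgs, hgt]; exact hlt') N
end

section
/- Let F = Π_{i∈ω} A_i ⊆ ω^ω with A_i finite, and define relations on ⋃_p Π_{i<p} A_i by: s R_n t iff |s| = |t|, s ≤_lex t, and (N_s × N_t) ∩ Gr(f_n) ≠ ∅; s R t iff s R_n t for some n; T the symmetrization of R; and E the equivalence relation generated by T, where (f_n) are the functions of the departure situation built from the prime coding J. Then for any s, t of the same length, there is at most one repetition-free T-chain u with u(0) = s and u(|u|−1) = t. -/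
open scoped Classical

/-- The recursively defined sets `A_i = {1} ∪ {J(u⌢1) : u ∈ Π_{p<i} A_p}`. -/
noncomputable def Aset : ℕ → Set ℕ := fun i =>
  Nat.strongRecOn i (fun i ih =>
    {1} ∪ {n | ∃ u : Fin i → ℕ, (∀ p : Fin i, u p ∈ ih p.val p.isLt) ∧
      n = Jcode (List.ofFn u ++ [1])})

/-- The clopen domain `D_{f_{s,t}}` of the departure-situation function `f_{s,t}`. -/
noncomputable def Ddep (s t : List ℕ) : Set (ℕ → ℕ) :=
  {α | (∀ i, α i ∈ Aset i) ∧ ∀ j ≤ s.length,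
    α (Jcode (s.take j ++ t.take (j + 1))) = 1 ∧
    ∀ p < t.getD j 0, α (Jcode (s.take j ++ t.take j ++ [p])) ≠ 1}

/-- The departure-situation function `f_{s,t}`: it replaces the coordinates at the
positions `J(s↾j ⌢ t↾(j+1))` by `J(α↾(q+1))` and leaves the others unchanged. -/
noncomputable def fdep (s t : List ℕ) (α : ℕ → ℕ) : ℕ → ℕ := fun q =>
  if ∃ j ≤ s.length, q = Jcode (s.take j ++ t.take (j + 1)) then
    Jcode (List.ofFn fun i : Fin (q + 1) => α i)
  else α q

/-- The relation `R`: `s R t` iff `|s| = |t|`, `s ≤_lex t` and some basic rectangle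
`N_s × N_t` meets the graph of some departure-situation function `f_{c,d}`. -/
noncomputable def Rrel (s t : List ℕ) : Prop :=
  s.length = t.length ∧ (List.Lex (· < ·) s t ∨ s = t) ∧
  ∃ c d : List ℕ, d.length = c.length + 1 ∧
    ∃ α : ℕ → ℕ, α ∈ Ddep c d ∧ (∀ i < s.length, α i = s.getD i 0) ∧
      ∀ i < t.length, fdep c d α i = t.getD i 0

/-- The symmetrization `T` of `R`. -/
noncomputable def Trel (s t : List ℕ) : Prop := Rrel s t ∨ Rrel t s

section JcodeLemmas

local notation "q" => Nat.nth Nat.Prime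

lemma q_prime (n : ℕ) : (q n).Prime := Nat.prime_nth_prime n

lemma q_strictMono : StrictMono q := Nat.nth_strictMono Nat.infinite_setOf_prime

lemma jcode_of_ne_nil {L : List ℕ} (h : L ≠ []) :
    Jcode L = ∏ j ∈ Finset.range L.length, (q j) ^ (L.getD j 0 + 1) := if_neg h

lemma jcode_two_le {L : List ℕ} (h : L ≠ []) : 2 ≤ Jcode L := by
  rw [jcode_of_ne_nil h]
  have h0 : (0 : ℕ) ∈ Finset.range L.length := by
    simp [Finset.mem_range, List.length_pos_iff.mpr h]
  calc (2:ℕ) ≤ q 0 ^ (L.getD 0 0 + 1) := by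
        calc (2:ℕ) ≤ q 0 := (q_prime 0).two_le
        _ ≤ q 0 ^ (L.getD 0 0 + 1) := Nat.le_self_pow (by omega) _
    _ ≤ _ := Finset.single_le_prod' (f := fun j => q j ^ (L.getD j 0 + 1))
        (fun i _ => Nat.one_le_pow _ _ (q_prime i).pos) h0

lemma jcode_ne_one {L : List ℕ} (h : L ≠ []) : Jcode L ≠ 1 := by
  have := jcode_two_le h; omega

lemma jcode_factorization {L : List ℕ} (h : L ≠ []) (m : ℕ) (hm : m < L.length) :
    (Jcode L).factorization (q m) = L.getD m 0 + 1 := by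
  rw [jcode_of_ne_nil h, Nat.factorization_prod
    (fun i _ => pow_ne_zero _ (q_prime i).pos.ne')]
  rw [Finsupp.finset_sum_apply]
  have : ∀ i ∈ Finset.range L.length,
      ((q i ^ (L.getD i 0 + 1)).factorization) (q m)
        = if i = m then L.getD i 0 + 1 else 0 := by
    intro i _
    rw [(q_prime i).factorization_pow, Finsupp.single_apply]
    congr 1
    simp only [eq_iff_iff]
    exact ⟨fun h' => q_strictMono.injective h', fun h' => by rw [h']⟩
  rw [Finset.sum_congr rfl this, Finset.sum_ite_eq' (Finset.range L.length)]
  simp [Finset.mem_range, hm]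

lemma jcode_factorization_zero {L : List ℕ} (h : L ≠ []) (m : ℕ) (hm : L.length ≤ m) :
    (Jcode L).factorization (q m) = 0 := by
  rw [jcode_of_ne_nil h, Nat.factorization_prod
    (fun i _ => pow_ne_zero _ (q_prime i).pos.ne')]
  rw [Finsupp.finset_sum_apply]
  apply Finset.sum_eq_zero
  intro i hi
  rw [(q_prime i).factorization_pow, Finsupp.single_apply, if_neg]
  intro h'
  have := q_strictMono.injective h'
  simp only [Finset.mem_range] at hi
  omega

lemma jcode_inj {L1 L2 : List ℕ} (h1 : L1 ≠ []) (h2 : L2 ≠ [])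
    (h : Jcode L1 = Jcode L2) : L1 = L2 := by
  have hlen : L1.length = L2.length := by
    by_contra hne
    rcases Nat.lt_or_ge L1.length L2.length with hlt | hge
    · have e1 := jcode_factorization_zero h1 (L2.length - 1) (by omega)
      have e2 := jcode_factorization h2 (L2.length - 1) (by
        have := List.length_pos_iff.mpr h2; omega)
      rw [h] at e1; omega
    · have hlt : L2.length < L1.length := by omega
      have e1 := jcode_factorization h1 (L1.length - 1) (by
        have := List.length_pos_iff.mpr h1; omega)
      have e2 := jcode_factorization_zero h2 (L1.length - 1) (by omega)
      rw [h] at e1; omega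
  apply List.ext_getElem hlen
  intro i hi1 hi2
  have e1 := jcode_factorization h1 i hi1
  have e2 := jcode_factorization h2 i hi2
  rw [h] at e1
  have : L1.getD i 0 = L2.getD i 0 := by omega
  rwa [List.getD_eq_getElem _ _ hi1, List.getD_eq_getElem _ _ hi2] at this

lemma jcode_append_lt (A B : List ℕ) (hB : B ≠ []) (z z' : ℕ) :
    Jcode (A ++ B) < Jcode (A ++ z :: (B ++ [z'])) := by
  have hb : 1 ≤ B.length := List.length_pos_iff.mpr hB
  have hL1 : (A ++ B) ≠ [] := by simp [hB]
  have hL2 : (A ++ z :: (B ++ [z'])) ≠ [] := by simp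
  rw [jcode_of_ne_nil hL1, jcode_of_ne_nil hL2]
  have len1 : (A ++ B).length = A.length + B.length := by simp
  have len2 : (A ++ z :: (B ++ [z'])).length = A.length + (1 + (B.length + 1)) := by
    simp; omega
  rw [len1, len2, Finset.prod_range_add, Finset.prod_range_add]
  have hhead : ∀ r ∈ Finset.range A.length,
      q r ^ ((A ++ B).getD r 0 + 1) = q r ^ ((A ++ z :: (B ++ [z'])).getD r 0 + 1) := by
    intro r hr
    simp only [Finset.mem_range] at hr
    rw [List.getD_append _ _ _ _ hr, List.getD_append _ _ _ _ hr]
  rw [Finset.prod_congr rfl hhead]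
  have hheadpos : 0 < ∏ r ∈ Finset.range A.length,
      q r ^ ((A ++ z :: (B ++ [z'])).getD r 0 + 1) :=
    Finset.prod_pos (fun i _ => pow_pos (q_prime i).pos _)
  apply Nat.mul_lt_mul_of_le_of_lt le_rfl ?_ hheadpos
  -- simplify T entries
  have hT : ∀ x ∈ Finset.range B.length,
      q (A.length + x) ^ ((A ++ B).getD (A.length + x) 0 + 1)
        = q (A.length + x) ^ (B.getD x 0 + 1) := by
    intro x _
    rw [List.getD_append_right _ _ _ _ (by omega), Nat.add_sub_cancel_left]
  rw [Finset.prod_congr rfl hT, Finset.prod_range_add, Finset.prod_range_one]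
  have hz : (A ++ z :: (B ++ [z'])).getD (A.length + 0) 0 = z := by
    rw [List.getD_append_right _ _ _ _ (by omega)]
    simp
  rw [hz, Finset.prod_range_succ]
  have hmid : ∀ x ∈ Finset.range B.length,
      q (A.length + (1 + x)) ^ ((A ++ z :: (B ++ [z'])).getD (A.length + (1 + x)) 0 + 1)
        = q (A.length + (1 + x)) ^ (B.getD x 0 + 1) := by
    intro x hx
    simp only [Finset.mem_range] at hx
    rw [List.getD_append_right _ _ _ _ (by omega), Nat.add_sub_cancel_left]
    rw [show 1 + x = x + 1 from by omega, List.getD_cons_succ,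
      List.getD_append _ _ _ _ hx]
  rw [Finset.prod_congr rfl hmid]
  have key : (∏ x ∈ Finset.range B.length, q (A.length + x) ^ (B.getD x 0 + 1))
      < ∏ x ∈ Finset.range B.length, q (A.length + (1 + x)) ^ (B.getD x 0 + 1) := by
    apply Finset.prod_lt_prod_of_nonempty
    · intro i _; exact pow_pos (q_prime _).pos _
    · intro i _
      exact Nat.pow_lt_pow_left (q_strictMono (by omega)) (by omega)
    · exact ⟨0, by simpa using (show 0 < B.length by omega)⟩
  calc (∏ x ∈ Finset.range B.length, q (A.length + x) ^ (B.getD x 0 + 1))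
      < ∏ x ∈ Finset.range B.length, q (A.length + (1 + x)) ^ (B.getD x 0 + 1) := key
    _ ≤ q (A.length + 0) ^ (z + 1) *
        ((∏ x ∈ Finset.range B.length, q (A.length + (1 + x)) ^ (B.getD x 0 + 1)) *
          q (A.length + (1 + B.length)) ^
            ((A ++ z :: (B ++ [z'])).getD (A.length + (1 + B.length)) 0 + 1)) := by
      have h1 : 1 ≤ q (A.length + 0) ^ (z + 1) := Nat.one_le_pow _ _ (q_prime _).pos
      have h2 : 1 ≤ q (A.length + (1 + B.length)) ^
          ((A ++ z :: (B ++ [z'])).getD (A.length + (1 + B.length)) 0 + 1) :=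
        Nat.one_le_pow _ _ (q_prime _).pos
      calc (∏ x ∈ Finset.range B.length, q (A.length + (1 + x)) ^ (B.getD x 0 + 1))
          = 1 * ((∏ x ∈ Finset.range B.length, q (A.length + (1 + x)) ^ (B.getD x 0 + 1)) * 1) := by ring
        _ ≤ _ := by
            apply Nat.mul_le_mul h1
            apply Nat.mul_le_mul le_rfl h2

end JcodeLemmas

noncomputable def Kpos (c d : List ℕ) (j : ℕ) : ℕ := Jcode (c.take j ++ d.take (j + 1))

lemma take_ne_nil_of_pos {d : List ℕ} (hd : d ≠ []) (j : ℕ) : d.take (j + 1) ≠ [] := by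
  simp [List.take_eq_nil_iff, hd]

lemma kpos_step {c d : List ℕ} (hd : d.length = c.length + 1) {j : ℕ}
    (h : j + 1 ≤ c.length) : Kpos c d j < Kpos c d (j + 1) := by
  have hdnil : d ≠ [] := by intro h'; rw [h'] at hd; simp at hd
  have hc : j < c.length := h
  have hdl : j + 1 < d.length := by omega
  have e1 : c.take (j+1) = c.take j ++ [c.get ⟨j, hc⟩] := by
    rw [← List.take_concat_get hc, List.concat_eq_append]; simp [List.get_eq_getElem]
  have e2 : d.take (j+2) = d.take (j+1) ++ [d.get ⟨j+1, hdl⟩] := by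
    rw [← List.take_concat_get hdl, List.concat_eq_append]; simp [List.get_eq_getElem]
  unfold Kpos
  rw [e1, e2, List.append_assoc, List.singleton_append]
  exact jcode_append_lt _ _ (take_ne_nil_of_pos hdnil j) _ _

lemma kpos_mono {c d : List ℕ} (hd : d.length = c.length + 1) {j j' : ℕ}
    (h : j < j') (h' : j' ≤ c.length) : Kpos c d j < Kpos c d j' := by
  induction j' with
  | zero => omega
  | succ k ih =>
    rcases Nat.lt_or_ge j k with hk | hk
    · exact (ih hk (by omega)).trans (kpos_step hd h')
    · have : j = k := by omega
      subst this
      exact kpos_step hd h'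

lemma kpos_shared {c d c' d' : List ℕ} (hd : d.length = c.length + 1)
    (hd' : d'.length = c'.length + 1) {j1 j1' : ℕ} (h1 : j1 ≤ c.length)
    (h1' : j1' ≤ c'.length) (heq : Kpos c d j1 = Kpos c' d' j1') :
    j1 = j1' ∧ ∀ j ≤ j1, Kpos c d j = Kpos c' d' j := by
  have hdnil : d ≠ [] := by intro h'; rw [h'] at hd; simp at hd
  have hdnil' : d' ≠ [] := by intro h'; rw [h'] at hd'; simp at hd'
  have hne : c.take j1 ++ d.take (j1+1) ≠ [] := by
    simp [take_ne_nil_of_pos hdnil j1]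
  have hne' : c'.take j1' ++ d'.take (j1'+1) ≠ [] := by
    simp [take_ne_nil_of_pos hdnil' j1']
  have hL : c.take j1 ++ d.take (j1+1) = c'.take j1' ++ d'.take (j1'+1) :=
    jcode_inj hne hne' heq
  have hlen : j1 + (j1 + 1) = j1' + (j1' + 1) := by
    have := congrArg List.length hL
    simpa [List.length_take, Nat.min_eq_left h1, Nat.min_eq_left h1',
      Nat.min_eq_left (show j1 + 1 ≤ d.length by omega),
      Nat.min_eq_left (show j1' + 1 ≤ d'.length by omega)] using this
  have hj : j1 = j1' := by omega
  subst hj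
  refine ⟨rfl, fun j hj => ?_⟩
  have hlc : (c.take j1).length = j1 := by simp [List.length_take, Nat.min_eq_left h1]
  have hlc' : (c'.take j1).length = j1 := by simp [List.length_take, Nat.min_eq_left h1']
  have hctake : c.take j1 = c'.take j1 := by
    have := congrArg (List.take j1) hL
    rwa [List.take_append_of_le_length (by omega), List.take_append_of_le_length (by omega),
      List.take_take, List.take_take, Nat.min_self] at this
  have hdtake : d.take (j1+1) = d'.take (j1+1) := by
    have h2 := congrArg (List.drop j1) hL
    rw [List.drop_append_of_le_length (by omega), List.drop_append_of_le_length (by omega),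
      List.drop_eq_nil_of_le (by omega), List.drop_eq_nil_of_le (by omega),
      List.nil_append, List.nil_append] at h2
    exact h2
  unfold Kpos
  have ec : c.take j = c'.take j := by
    calc c.take j = (c.take j1).take j := by rw [List.take_take, Nat.min_eq_left hj]
      _ = (c'.take j1).take j := by rw [hctake]
      _ = c'.take j := by rw [List.take_take, Nat.min_eq_left hj]
  have ed : d.take (j+1) = d'.take (j+1) := by
    calc d.take (j+1) = (d.take (j1+1)).take (j+1) := by
          rw [List.take_take, Nat.min_eq_left (by omega)]
      _ = (d'.take (j1+1)).take (j+1) := by rw [hdtake]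
      _ = d'.take (j+1) := by rw [List.take_take, Nat.min_eq_left (by omega)]
  rw [ec, ed]

lemma ofFn_eq_take {α : ℕ → ℕ} {s : List ℕ} {i : ℕ} (hi : i < s.length)
    (hs : ∀ r < s.length, α r = s.getD r 0) :
    (List.ofFn fun r : Fin (i + 1) => α r) = s.take (i + 1) := by
  apply List.ext_getElem
  · simp [List.length_take]; omega
  · intro r h1 h2
    have hr : r < i + 1 := by simpa using h1
    have hrs : r < s.length := by omega
    simp only [List.getElem_ofFn, List.getElem_take]
    rw [hs r hrs, List.getD_eq_getElem _ _ hrs]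

lemma rrel_spec {s t : List ℕ} (h : Rrel s t) :
    s.length = t.length ∧ ∃ c d : List ℕ, d.length = c.length + 1 ∧
      ∀ i < s.length,
        ((∃ j ≤ c.length, i = Kpos c d j) →
            s.getD i 0 = 1 ∧ t.getD i 0 = Jcode (s.take (i + 1))) ∧
        ((∀ j, j ≤ c.length → i ≠ Kpos c d j) → t.getD i 0 = s.getD i 0) := by
  obtain ⟨hlen, -, c, d, hd, α, hα, hαs, hτ⟩ := h
  refine ⟨hlen, c, d, hd, fun i hi => ⟨fun hex => ?_, fun hnot => ?_⟩⟩
  · have hαK : ∀ j ≤ c.length, α (Kpos c d j) = 1 := fun j hj => (hα.2 j hj).1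
    obtain ⟨j, hj, hij⟩ := hex
    have hs1 : s.getD i 0 = 1 := by
      rw [← hαs i hi, hij]; exact hαK j hj
    refine ⟨hs1, ?_⟩
    have hit : i < t.length := by omega
    rw [← hτ i hit]
    show fdep c d α i = _
    unfold fdep
    rw [if_pos ⟨j, hj, by rw [hij]; rfl⟩]
    rw [ofFn_eq_take hi hαs]
  · have hit : i < t.length := by omega
    rw [← hτ i hit, ← hαs i hi]
    show fdep c d α i = α i
    unfold fdep
    rw [if_neg]
    rintro ⟨j, hj, hij⟩
    exact hnot j hj hij

lemma rrel_len {s t : List ℕ} (h : Rrel s t) : s.length = t.length := h.1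


lemma list_ext_getD {s t : List ℕ} (hlen : s.length = t.length)
    (h : ∀ i < s.length, s.getD i 0 = t.getD i 0) : s = t := by
  apply List.ext_getElem hlen
  intro i h1 h2
  have := h i h1
  rwa [List.getD_eq_getElem _ _ h1, List.getD_eq_getElem _ _ h2] at this

lemma getD_take' {s : List ℕ} {n i : ℕ} (h : i < n) :
    (s.take n).getD i 0 = s.getD i 0 := by
  rw [List.getD_eq_getElem?_getD, List.getD_eq_getElem?_getD, List.getElem?_take, if_pos h]

lemma getD_dropLast {s : List ℕ} {i l : ℕ} (hlen : s.length = l + 1) (hi : i < l) :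
    s.dropLast.getD i 0 = s.getD i 0 := by
  rw [List.dropLast_eq_take, hlen]
  exact getD_take' (by omega)

lemma take_all {s : List ℕ} {l : ℕ} (hlen : s.length = l + 1) : s.take (l + 1) = s := by
  rw [← hlen, List.take_length]

lemma jcode_take_ne_one {s : List ℕ} {i : ℕ} (hi : i < s.length) :
    Jcode (s.take (i + 1)) ≠ 1 := by
  apply jcode_ne_one
  apply take_ne_nil_of_pos
  intro h; rw [h] at hi; simp at hi

lemma jcode_take_two_le {s : List ℕ} {i : ℕ} (hi : i < s.length) :
    2 ≤ Jcode (s.take (i + 1)) := by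
  apply jcode_two_le
  apply take_ne_nil_of_pos
  intro h; rw [h] at hi; simp at hi

lemma rrel_diff_pt {s t : List ℕ} (h : Rrel s t) {i : ℕ} (hi : i < s.length)
    (hne : s.getD i 0 ≠ t.getD i 0) :
    s.getD i 0 = 1 ∧ t.getD i 0 = Jcode (s.take (i + 1)) := by
  obtain ⟨hlen, c, d, hd, hspec⟩ := rrel_spec h
  by_cases hex : ∃ j ≤ c.length, i = Kpos c d j
  · exact (hspec i hi).1 hex
  · exfalso
    push_neg at hex
    exact hne ((hspec i hi).2 hex).symm

def EdgeRel (s t : List ℕ) : Prop := s ≠ t ∧ Trel s t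

lemma edge_symm {s t : List ℕ} (h : EdgeRel s t) : EdgeRel t s :=
  ⟨h.1.symm, h.2.symm⟩

lemma edge_len {s t : List ℕ} (h : EdgeRel s t) : s.length = t.length := by
  rcases h.2 with h' | h'
  · exact rrel_len h'
  · exact (rrel_len h').symm

lemma edge_last {l : ℕ} {u w : List ℕ} (h : EdgeRel u w) (hlen : u.length = l + 1)
    (hx : u.getD l 0 ≠ w.getD l 0) :
    (u.getD l 0 = 1 ∧ w.getD l 0 = Jcode u ∧ Rrel u w) ∨
    (w.getD l 0 = 1 ∧ u.getD l 0 = Jcode w ∧ Rrel w u) := by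
  have hwlen : w.length = l + 1 := by rw [← edge_len h]; exact hlen
  rcases h.2 with hr | hr
  · left
    have := rrel_diff_pt hr (i := l) (by omega) hx
    rw [take_all hlen] at this
    exact ⟨this.1, this.2, hr⟩
  · right
    have := rrel_diff_pt hr (i := l) (by omega) (Ne.symm hx)
    rw [take_all hwlen] at this
    exact ⟨this.1, this.2, hr⟩

lemma edge_last_eq {l : ℕ} {u w : List ℕ} (h : EdgeRel u w) (hlen : u.length = l + 1)
    (h1 : u.getD l 0 ≠ 1) (h2 : w.getD l 0 ≠ 1) : u.getD l 0 = w.getD l 0 := by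
  by_contra hx
  rcases edge_last h hlen hx with ⟨e, -⟩ | ⟨e, -⟩
  · exact h1 e
  · exact h2 e

lemma lex_of_getD {s t : List ℕ} (hlen : s.length = t.length) (hne : s ≠ t)
    (h : ∀ i < s.length, s.getD i 0 ≠ t.getD i 0 → s.getD i 0 < t.getD i 0) :
    List.Lex (· < ·) s t := by
  induction s generalizing t with
  | nil =>
    cases t with
    | nil => exact absurd rfl hne
    | cons b t' => simp at hlen
  | cons a s' ih =>
    cases t with
    | nil => simp at hlen
    | cons b t' =>
      by_cases hab : a = b
      · subst hab
        apply List.Lex.cons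
        apply ih
        · simpa using hlen
        · intro h'; exact hne (by rw [h'])
        · intro i hi hne'
          have := h (i + 1) (by simpa using Nat.succ_lt_succ hi)
          simpa using this (by simpa using hne')
      · have := h 0 (by simp)
        simp only [List.getD_cons_zero] at this
        exact List.Lex.rel (this hab)

lemma rrel_dropLast {l : ℕ} {s t : List ℕ} (h : Rrel s t) (hlen : s.length = l + 1)
    (hx : s.getD l 0 = t.getD l 0) (hne : s ≠ t) : Rrel s.dropLast t.dropLast := by
  have htlen : t.length = l + 1 := by rw [← rrel_len h]; exact hlen
  have hsl : s.dropLast.length = l := by simp [hlen]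
  have htl : t.dropLast.length = l := by simp [htlen]
  have hdiffpt : ∀ i < l, s.dropLast.getD i 0 ≠ t.dropLast.getD i 0 →
      s.dropLast.getD i 0 = 1 ∧ t.dropLast.getD i 0 = Jcode (s.take (i + 1)) := by
    intro i hi hne'
    rw [getD_dropLast hlen hi, getD_dropLast htlen hi] at hne' ⊢
    exact rrel_diff_pt h (by omega) hne'
  have hne' : s.dropLast ≠ t.dropLast := by
    intro heq
    apply hne
    apply list_ext_getD (by omega)
    intro i hi
    rcases Nat.lt_or_ge i l with hil | hil
    · rw [← getD_dropLast hlen hil, ← getD_dropLast htlen hil, heq]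
    · have : i = l := by omega
      rw [this]; exact hx
  obtain ⟨-, hlex, c, d, hd, α, hα, hαs, hτ⟩ := h
  refine ⟨by omega, ?_, c, d, hd, α, hα, ?_, ?_⟩
  · left
    apply lex_of_getD (by omega) hne'
    intro i hi hne''
    rw [hsl] at hi
    obtain ⟨e1, e2⟩ := hdiffpt i hi hne''
    rw [e1, e2]
    exact jcode_take_two_le (by omega)
  · intro i hi
    rw [hsl] at hi
    rw [getD_dropLast hlen hi]
    exact hαs i (by omega)
  · intro i hi
    rw [htl] at hi
    rw [getD_dropLast htlen hi]
    exact hτ i (by omega)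

lemma edge_dropLast {l : ℕ} {u w : List ℕ} (h : EdgeRel u w) (hlen : u.length = l + 1)
    (hx : u.getD l 0 = w.getD l 0) : EdgeRel u.dropLast w.dropLast := by
  have hwlen : w.length = l + 1 := by rw [← edge_len h]; exact hlen
  have hne' : u.dropLast ≠ w.dropLast := by
    intro heq
    apply h.1
    apply list_ext_getD (by omega)
    intro i hi
    rcases Nat.lt_or_ge i l with hil | hil
    · rw [← getD_dropLast hlen hil, ← getD_dropLast hwlen hil, heq]
    · have : i = l := by omega
      rw [this]; exact hx
  rcases h.2 with hr | hr
  · exact ⟨hne', Or.inl (rrel_dropLast hr hlen hx h.1)⟩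
  · exact ⟨hne', Or.inr (rrel_dropLast hr hwlen hx.symm (Ne.symm h.1))⟩

lemma rrel_last_determines {l : ℕ} {A T T' : List ℕ} (hlA : A.length = l + 1)
    (h1 : Rrel A T) (h2 : Rrel A T')
    (hx : A.getD l 0 ≠ T.getD l 0) (hx' : A.getD l 0 ≠ T'.getD l 0) : T = T' := by
  obtain ⟨hlen1, c, d, hd, hspec1⟩ := rrel_spec h1
  obtain ⟨hlen2, c', d', hd', hspec2⟩ := rrel_spec h2
  have hl : l < A.length := by omega
  -- the last coordinate is a changed position for both
  have hj1 : ∃ j ≤ c.length, l = Kpos c d j := by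
    by_contra hno
    push_neg at hno
    exact hx ((hspec1 l hl).2 hno).symm
  have hj2 : ∃ j ≤ c'.length, l = Kpos c' d' j := by
    by_contra hno
    push_neg at hno
    exact hx' ((hspec2 l hl).2 hno).symm
  obtain ⟨j1, hj1le, hj1e⟩ := hj1
  obtain ⟨j2, hj2le, hj2e⟩ := hj2
  obtain ⟨hjj, hKeq⟩ := kpos_shared hd hd' hj1le hj2le (by rw [← hj1e, ← hj2e])
  subst hjj
  apply list_ext_getD (by omega)
  intro i hiT
  have hiA : i < A.length := by omega
  have hil : i ≤ l := by omega
  by_cases hex : ∃ j ≤ j1, i = Kpos c d j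
  · obtain ⟨j, hj, hij⟩ := hex
    have e1 := (hspec1 i hiA).1 ⟨j, by omega, hij⟩
    have e2 := (hspec2 i hiA).1 ⟨j, by omega, by rw [← hKeq j hj]; exact hij⟩
    rw [e1.2, e2.2]
  · push_neg at hex
    have hno1 : ∀ j, j ≤ c.length → i ≠ Kpos c d j := by
      intro j hj hij
      rcases le_or_gt j j1 with hle | hlt
      · exact hex j hle hij
      · have := kpos_mono hd hlt hj
        rw [← hj1e] at this
        omega
    have hno2 : ∀ j, j ≤ c'.length → i ≠ Kpos c' d' j := by
      intro j hj hij
      rcases le_or_gt j j1 with hle | hlt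
      · exact hex j hle (by rw [hKeq j hle]; exact hij)
      · have := kpos_mono hd' hlt hj
        rw [← hj2e] at this
        omega
    rw [(hspec1 i hiA).2 hno1, (hspec2 i hiA).2 hno2]

lemma vmod {n : ℕ} {v : ℕ → List ℕ} (hn : 0 < n) (hper : ∀ r, v (r + n) = v r) :
    ∀ r, v r = v (r % n) := by
  intro r
  induction r using Nat.strong_induction_on with
  | _ r ih =>
    rcases Nat.lt_or_ge r n with h | h
    · rw [Nat.mod_eq_of_lt h]
    · calc v r = v ((r - n) + n) := by rw [Nat.sub_add_cancel h]
        _ = v (r - n) := hper _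
        _ = v ((r - n) % n) := ih _ (by omega)
        _ = v (r % n) := by rw [← Nat.mod_eq_sub_mod h]

lemma veq_mod {n : ℕ} {v : ℕ → List ℕ} (hn : 0 < n) (hper : ∀ r, v (r + n) = v r)
    (hinj : ∀ r1 r2, r1 < n → r2 < n → v r1 = v r2 → r1 = r2) {a b : ℕ}
    (h : v a = v b) : a % n = b % n := by
  apply hinj _ _ (Nat.mod_lt _ hn) (Nat.mod_lt _ hn)
  rw [← vmod hn hper a, ← vmod hn hper b]
  exact h

lemma heart {l n : ℕ} {v : ℕ → List ℕ} (h3 : 3 ≤ n)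
    (hlen : ∀ r, (v r).length = l + 1)
    (hedge : ∀ r, EdgeRel (v r) (v (r + 1)))
    (hper : ∀ r, v (r + n) = v r)
    (hinj : ∀ r1 r2, r1 < n → r2 < n → v r1 = v r2 → r1 = r2)
    (h0 : (v 0).getD l 0 = 1) (h1 : (v 1).getD l 0 ≠ 1) : False := by
  have hn : 0 < n := by omega
  have hnnil : ∀ r, v r ≠ [] := by
    intro r h'
    have := hlen r
    rw [h'] at this
    simp at this
  rcases edge_last (hedge 0) (hlen 0) (by rw [h0]; exact fun h => h1 h.symm)
    with ⟨-, hh, hr0⟩ | ⟨e, -⟩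
  swap
  · exact h1 e
  have hPex : ∃ r, 1 ≤ r ∧ (v (r + 1)).getD l 0 = 1 := by
    refine ⟨n - 1, by omega, ?_⟩
    rw [show n - 1 + 1 = n from by omega, show (n : ℕ) = 0 + n from by omega, hper, h0]
  set b := Nat.find hPex with hbdef
  obtain ⟨hb1, hvb1⟩ := Nat.find_spec hPex
  have hmin : ∀ m, m < b → ¬(1 ≤ m ∧ (v (m + 1)).getD l 0 = 1) := fun m hm => Nat.find_min hPex hm
  have hble : b ≤ n - 1 := Nat.find_le ⟨by omega, by
    rw [show n - 1 + 1 = n from by omega, show (n : ℕ) = 0 + n from by omega, hper, h0]⟩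
  have hstretch : ∀ r, 1 ≤ r → r ≤ b → (v r).getD l 0 = (v 1).getD l 0 := by
    intro r h1r hrb
    induction r with
    | zero => omega
    | succ k ih =>
      rcases Nat.eq_or_lt_of_le h1r with he | hlt
      · rw [← he]
      · have hk1 : 1 ≤ k := by omega
        have hkb : k ≤ b := by omega
        have ihk := ih hk1 hkb
        have hknot1 : (v k).getD l 0 ≠ 1 := by rw [ihk]; exact h1
        have hk1not1 : (v (k + 1)).getD l 0 ≠ 1 := by
          intro h'
          exact hmin k (by omega) ⟨hk1, h'⟩
        rw [← edge_last_eq (hedge k) (hlen k) hknot1 hk1not1, ihk]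
  have hvb : (v b).getD l 0 = (v 1).getD l 0 := hstretch b hb1 le_rfl
  have hxb : (v b).getD l 0 ≠ (v (b + 1)).getD l 0 := by
    rw [hvb, hvb1]
    exact h1
  rcases edge_last (hedge b) (hlen b) hxb with ⟨e, -, -⟩ | ⟨-, hh', hrb⟩
  · rw [hvb] at e
    exact h1 e
  have hA : v 0 = v (b + 1) := by
    apply jcode_inj (hnnil 0) (hnnil (b + 1))
    rw [← hh, ← hh', hvb]
  have hb1n : b + 1 = n := by
    have hm := veq_mod hn hper hinj hA
    rw [Nat.zero_mod] at hm
    rcases Nat.lt_or_ge (b + 1) n with hlt | hge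
    · rw [Nat.mod_eq_of_lt hlt] at hm
      omega
    · omega
  rw [← hA] at hrb
  have hT : v 1 = v b := by
    apply rrel_last_determines (hlen 0) hr0 hrb
    · rw [h0]
      exact fun h => h1 h.symm
    · rw [h0, hvb]
      exact fun h => h1 h.symm
  have := hinj 1 b (by omega) (by omega) hT
  omega

lemma vper_mul {n : ℕ} {v : ℕ → List ℕ} (hper : ∀ r, v (r + n) = v r) :
    ∀ k m, v (m + k * n) = v m := by
  intro k
  induction k with
  | zero => simp
  | succ k ih =>
    intro m
    rw [Nat.succ_mul, ← Nat.add_assoc, hper, ih]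

lemma core : ∀ l n (v : ℕ → List ℕ), 3 ≤ n → (∀ r, (v r).length = l) →
    (∀ r, EdgeRel (v r) (v (r + 1))) → (∀ r, v (r + n) = v r) →
    (∀ r1 r2, r1 < n → r2 < n → v r1 = v r2 → r1 = r2) → False := by
  intro l
  induction l with
  | zero =>
    intro n v h3 hlen hedge hper hinj
    apply (hedge 0).1
    rw [List.eq_nil_of_length_eq_zero (hlen 0), List.eq_nil_of_length_eq_zero (hlen 1)]
  | succ l ih =>
    intro n v h3 hlen hedge hper hinj
    have hn : 0 < n := by omega
    by_cases hch : ∃ r0, r0 < n ∧ (v r0).getD l 0 ≠ (v (r0 + 1)).getD l 0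
    · obtain ⟨r0, hr0n, hchg⟩ := hch
      rcases edge_last (hedge r0) (hlen r0) hchg with ⟨e1, -, -⟩ | ⟨e1, -, -⟩
      · -- v r0 is the 1-endpoint; shift by r0
        apply heart (l := l) (n := n) (v := fun r => v (r0 + r)) h3 (fun r => hlen _)
        · intro r
          have := hedge (r0 + r)
          rwa [show r0 + r + 1 = r0 + (r + 1) from by omega] at this
        · intro r
          rw [show r0 + (r + n) = (r0 + r) + n from by omega, hper]
        · intro r1 r2 hr1 hr2 heq
          have hm := veq_mod hn hper hinj heq
          have : r1 ≡ r2 [MOD n] := Nat.ModEq.add_left_cancel' r0 hm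
          rwa [Nat.ModEq, Nat.mod_eq_of_lt hr1, Nat.mod_eq_of_lt hr2] at this
        · simpa using e1
        · intro h'
          apply hchg
          rw [e1, h']
      · -- v (r0+1) is the 1-endpoint; reverse the cycle
        apply heart (l := l) (n := n) (v := fun r => v (r0 + 1 + (n - 1) * r)) h3
          (fun r => hlen _)
        · intro r
          have ha : 1 ≤ r0 + 1 + (n - 1) * r := by omega
          have e : r0 + 1 + (n - 1) * (r + 1) = (r0 + 1 + (n - 1) * r - 1) + n := by
            rw [Nat.mul_succ]
            omega
          rw [e, hper]
          apply edge_symm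
          have := hedge (r0 + 1 + (n - 1) * r - 1)
          rwa [show r0 + 1 + (n - 1) * r - 1 + 1 = r0 + 1 + (n - 1) * r from by omega] at this
        · intro r
          rw [Nat.mul_add, ← Nat.add_assoc]
          exact vper_mul hper (n - 1) _
        · intro r1 r2 hr1 hr2 heq
          have hm := veq_mod hn hper hinj heq
          have h2 : (n - 1) * r1 ≡ (n - 1) * r2 [MOD n] :=
            Nat.ModEq.add_left_cancel' (r0 + 1) hm
          have h3' : (n - 1) * ((n - 1) * r1) ≡ (n - 1) * ((n - 1) * r2) [MOD n] :=
            Nat.ModEq.mul_left _ h2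
          obtain ⟨m, rfl⟩ : ∃ m, n = m + 3 := ⟨n - 3, by omega⟩
          have hsq : ∀ r : ℕ, (m + 3 - 1) * ((m + 3 - 1) * r) = r + (m + 1) * r * (m + 3) := by
            intro r
            have : m + 3 - 1 = m + 2 := by omega
            rw [this]
            ring
          rw [Nat.ModEq, hsq r1, hsq r2, Nat.add_mul_mod_self_right,
            Nat.add_mul_mod_self_right, Nat.mod_eq_of_lt hr1, Nat.mod_eq_of_lt hr2] at h3'
          exact h3'
        · simpa using e1
        · have e : r0 + 1 + (n - 1) * 1 = r0 + n := by omega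
          rw [e, hper]
          intro h'
          apply hchg
          rw [e1, h']
    · push_neg at hch
      have hconst : ∀ r, (v r).getD l 0 = (v 0).getD l 0 := by
        intro r
        induction r with
        | zero => rfl
        | succ k ih' =>
          have hstep : (v k).getD l 0 = (v (k + 1)).getD l 0 := by
            have h1 : v k = v (k % n) := vmod hn hper k
            have h2 : v (k + 1) = v (k % n + 1) := by
              rw [vmod hn hper (k + 1), vmod hn hper (k % n + 1)]
              congr 1
              rw [Nat.add_mod k 1 n, Nat.mod_eq_of_lt (show 1 < n by omega)]
            rw [h1, h2]
            exact hch (k % n) (Nat.mod_lt _ hn)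
          rw [← hstep]
          exact ih'
      apply ih n (fun r => (v r).dropLast) h3
      · intro r
        simp [hlen r]
      · intro r
        exact edge_dropLast (hedge r) (hlen r) (by rw [hconst r, hconst (r + 1)])
      · intro r
        show (v (r + n)).dropLast = (v r).dropLast
        rw [hper r]
      · intro r1 r2 hr1 hr2 heq
        apply hinj r1 r2 hr1 hr2
        apply list_ext_getD (by rw [hlen r1, hlen r2])
        intro i hi
        rw [hlen r1] at hi
        rcases Nat.lt_or_ge i l with hil | hil
        · rw [← getD_dropLast (hlen r1) hil, ← getD_dropLast (hlen r2) hil, heq]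
        · have : i = l := by omega
          rw [this, hconst r1, hconst r2]

noncomputable def Ggraph : SimpleGraph (List ℕ) where
  Adj := EdgeRel
  symm := ⟨fun _ _ h => edge_symm h⟩
  loopless := ⟨fun _ h => h.1 rfl⟩

noncomputable def mkWalk : (a : List ℕ) → (L : List (List ℕ)) → (t : List ℕ) →
    List.Chain EdgeRel a L → (a :: L).getLast (List.cons_ne_nil a L) = t → Ggraph.Walk a t
  | a, [], t, _, ht => (SimpleGraph.Walk.nil : Ggraph.Walk a a).copy rfl (by simpa using ht)
  | a, b :: L, t, h, ht =>
    SimpleGraph.Walk.cons ((List.chain_cons.mp h).1 : Ggraph.Adj a b)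
      (mkWalk b L t (List.chain_cons.mp h).2
        (by rw [← ht]; exact (List.getLast_cons (List.cons_ne_nil b L)).symm))

lemma mkWalk_support : ∀ (a : List ℕ) (L : List (List ℕ)) (t : List ℕ)
    (h : List.Chain EdgeRel a L) (ht : (a :: L).getLast (List.cons_ne_nil a L) = t),
    (mkWalk a L t h ht).support = a :: L
  | a, [], t, h, ht => by
    exact SimpleGraph.Walk.support_copy ..
  | a, b :: L, t, h, ht => by
    simp only [mkWalk, SimpleGraph.Walk.support_cons]
    exact congrArg (List.cons a) (mkWalk_support b L t _ _)

lemma acyclic : Ggraph.IsAcyclic := by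
  intro a c hc
  have hlen3 : 3 ≤ c.length := hc.three_le_length
  set L := c.support.tail with hL
  have hLlen : L.length = c.length := by
    have := c.length_support
    have h2 : c.support.length = L.length + 1 := by
      rw [c.support_eq_cons]; simp [hL]
    omega
  have hLnil : L ≠ [] := by
    intro h'
    rw [h'] at hLlen
    simp at hLlen
    omega
  have hnodup : L.Nodup := hc.support_nodup
  have hchain : List.Chain EdgeRel a L := by
    have h := SimpleGraph.Walk.isChain_adj_support c
    rw [c.support_eq_cons] at h
    exact h
  have hlast : L.getLast hLnil = a := by
    have h2 : c.support.getLast? = some a := by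
      rw [List.getLast?_eq_getLast c.support_ne_nil, c.getLast_support]
    rw [c.support_eq_cons, List.getLast?_eq_getLast (List.cons_ne_nil a L),
      List.getLast_cons hLnil] at h2
    exact Option.some_injective _ h2
  set n := L.length with hn
  have hn3 : 3 ≤ n := by omega
  have hn0 : 0 < n := by omega
  set f : ℕ → List ℕ := fun r => L.getD (r % n) [] with hf
  have hfper : ∀ r, f (r + n) = f r := by
    intro r
    simp [hf, Nat.add_mod_right]
  have hfget : ∀ r (h : r < n), f r = L.get ⟨r, by omega⟩ := by
    intro r h
    simp only [hf]
    rw [Nat.mod_eq_of_lt h, List.getD_eq_getElem _ _ (by omega)]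
    rfl
  have hchg : (∀ h : 0 < L.length, EdgeRel a (L.get ⟨0, h⟩)) ∧
      ∀ (i : ℕ) (h : i < L.length - 1), EdgeRel (L.get ⟨i, by omega⟩) (L.get ⟨i + 1, by omega⟩) := by
    have hc' := List.isChain_iff_getElem.mp hchain
    exact ⟨fun h => hc' 0 (by simp; omega), fun i h => hc' (i + 1) (by simp; omega)⟩
  have hfedge : ∀ r, EdgeRel (f r) (f (r + 1)) := by
    intro r
    have hr : r % n < n := Nat.mod_lt _ hn0
    have e1 : f r = L.get ⟨r % n, by omega⟩ := by
      simp only [hf]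
      rw [List.getD_eq_getElem _ _ (by omega : r % n < L.length)]
      rfl
    have e2 : f (r + 1) = L.getD ((r % n + 1) % n) [] := by
      simp only [hf]
      rw [Nat.add_mod r 1 n, Nat.mod_eq_of_lt (show 1 < n by omega)]
    rcases Nat.lt_or_ge (r % n) (n - 1) with hlt | hge
    · have e3 : (r % n + 1) % n = r % n + 1 := Nat.mod_eq_of_lt (by omega)
      rw [e1, e2, e3, List.getD_eq_getElem _ _ (by omega : r % n + 1 < L.length)]
      exact hchg.2 (r % n) (by omega)
    · have hrn : r % n = n - 1 := by omega
      have e3 : (r % n + 1) % n = 0 := by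
        rw [hrn, show n - 1 + 1 = n from by omega, Nat.mod_self]
      have e4 : f r = a := by
        rw [e1]
        have : L.get ⟨r % n, by omega⟩ = L.getLast hLnil := by
          rw [List.getLast_eq_getElem, List.get_eq_getElem]
          congr 1
        rw [this, hlast]
      rw [e4, e2, e3, List.getD_eq_getElem _ _ (by omega : 0 < L.length)]
      exact hchg.1 (by omega)
  have hflen : ∀ r, (f r).length = (f 0).length := by
    intro r
    induction r with
    | zero => rfl
    | succ k ih =>
      rw [← ih, ← edge_len (hfedge k)]
  have hfinj : ∀ r1 r2, r1 < n → r2 < n → f r1 = f r2 → r1 = r2 := by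
    intro r1 r2 h1 h2 heq
    rw [hfget r1 h1, hfget r2 h2] at heq
    have := (hnodup.get_inj_iff).mp heq
    simpa using congrArg Fin.val this
  exact core (f 0).length n f hn3 hflen hfedge hfper hfinj

lemma chain_upgrade : ∀ (a : List ℕ) (L : List (List ℕ)), List.Chain Trel a L →
    (a :: L).Nodup → List.Chain EdgeRel a L := by
  intro a L
  induction L generalizing a with
  | nil => intro _ _; exact List.Chain.nil
  | cons b L ih =>
    intro hch hnd
    obtain ⟨h1, h2⟩ := List.chain_cons.mp hch
    have hnd' := hnd
    rw [List.nodup_cons] at hnd'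
    refine List.chain_cons.mpr ⟨⟨?_, h1⟩, ih b h2 hnd'.2⟩
    intro h'
    exact hnd'.1 (by rw [h']; simp)

theorem unique_repetition_free_chain' (s t : List ℕ)
    (u v : List (List ℕ))
    (hund : u.Nodup) (hvnd : v.Nodup)
    (huc : u.Chain' Trel) (hvc : v.Chain' Trel)
    (huh : u.head? = some s) (hvh : v.head? = some s)
    (hul : u.getLast? = some t) (hvl : v.getLast? = some t) :
    u = v := by
  cases u with
  | nil => simp at huh
  | cons s1 u' =>
  cases v with
  | nil => simp at hvh
  | cons s2 v' =>
  have hs1 : s1 = s := by simpa using huh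
  have hs2 : s2 = s := by simpa using hvh
  subst s
  subst s1
  have hcu : List.Chain EdgeRel s2 u' := chain_upgrade s2 u' huc hund
  have hcv : List.Chain EdgeRel s2 v' := chain_upgrade s2 v' hvc hvnd
  have hlu : (s2 :: u').getLast (List.cons_ne_nil s2 u') = t := by
    rw [List.getLast?_eq_getLast (List.cons_ne_nil s2 u')] at hul
    simpa using hul
  have hlv : (s2 :: v').getLast (List.cons_ne_nil s2 v') = t := by
    rw [List.getLast?_eq_getLast (List.cons_ne_nil s2 v')] at hvl
    simpa using hvl
  have hpq := SimpleGraph.isAcyclic_iff_path_unique.mp acyclic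
    (⟨mkWalk s2 u' t hcu hlu,
      SimpleGraph.Walk.IsPath.mk' (by rw [mkWalk_support]; exact hund)⟩ : Ggraph.Path s2 t)
    (⟨mkWalk s2 v' t hcv hlv,
      SimpleGraph.Walk.IsPath.mk' (by rw [mkWalk_support]; exact hvnd)⟩ : Ggraph.Path s2 t)
  have h2 := congrArg (fun p : Ggraph.Path s2 t => (p.val).support) hpq
  simp only at h2
  rwa [mkWalk_support, mkWalk_support] at h2


/-- Condition (e)(ii) of a departure situation (Lemma 6): between any two finite
sequences `s, t ∈ ⋃_p Π_{i<p} A_i` of the same length there is at most one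
repetition-free `T`-chain from `s` to `t`. -/
theorem unique_repetition_free_chain (s t : List ℕ) (hlen : s.length = t.length)
    (hs : ∀ i < s.length, s.getD i 0 ∈ Aset i)
    (ht : ∀ i < t.length, t.getD i 0 ∈ Aset i)
    (u v : List (List ℕ))
    (hu : ∀ w ∈ u, ∀ i < w.length, w.getD i 0 ∈ Aset i)
    (hv : ∀ w ∈ v, ∀ i < w.length, w.getD i 0 ∈ Aset i)
    (hund : u.Nodup) (hvnd : v.Nodup)
    (huc : u.Chain' Trel) (hvc : v.Chain' Trel)
    (huh : u.head? = some s) (hvh : v.head? = some s)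
    (hul : u.getLast? = some t) (hvl : v.getLast? = some t) :
    u = v := by
  exact unique_repetition_free_chain' s t u v hund hvnd huc hvc huh hvh hul hvl
end
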